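/- arXiv:2111.10731 — 13 statements merged into one kernel-verified Lean document; each statement's English description precedes it below -/
import Mathlib

section
/- If G is a Godunova-Levin function on an interval V, i.e., G is nonnegative and G(ζm1 + (1-ζ)m2) ≤ (1/ζ)G(m1) + (1/(1-ζ))G(m2) for all m1, m2 ∈ V and ζ ∈ (0,1), and G is integrable on [m1, m2] ⊆ V with m1 < m2, then G((m1+m2)/2) ≤ (4/(m2-m1)) ∫_{m1}^{m2} G(x) dx. -/
open MeasureTheory intervalIntegral

theorem godunova_levin_left (V : Set ℝ) (hV : Convex ℝ V) (G : ℝ → ℝ)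
    (hnonneg : ∀ x ∈ V, 0 ≤ G x)
    (hGL : ∀ a ∈ V, ∀ b ∈ V, ∀ ζ ∈ Set.Ioo (0:ℝ) 1,
      G (ζ * a + (1 - ζ) * b) ≤ (1 / ζ) * G a + (1 / (1 - ζ)) * G b)
    (m1 m2 : ℝ) (hm1 : m1 ∈ V) (hm2 : m2 ∈ V) (hlt : m1 < m2)
    (hint : IntervalIntegrable G volume m1 m2) :
    G ((m1 + m2) / 2) ≤ (4 / (m2 - m1)) * ∫ x in m1..m2, G x := by
  set c := m2 - m1 with hc
  have hcpos : 0 < c := by simp [hc]; linarith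
  have hcne : c ≠ 0 := ne_of_gt hcpos
  -- integrability of the two compositions on [0,1]
  have h1 : IntervalIntegrable (fun t => G (c * t + m1)) volume 0 1 := by
    have := (hint.comp_add_right m1).comp_mul_left (c := c)
    simpa [hc, div_self hcne, div_self (sub_ne_zero.mpr hlt.ne')] using this
  have h2 : IntervalIntegrable (fun t => G (m2 - c * t)) volume 0 1 := by
    have := ((hint.comp_sub_left m2).comp_mul_left (c := c)).symm
    simpa [hc, div_self hcne, div_self (sub_ne_zero.mpr hlt.ne')] using this
  -- pointwise inequality on [0,1]
  have key : ∀ t ∈ Set.Icc (0:ℝ) 1,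
      G ((m1 + m2) / 2) ≤ 2 * G (c * t + m1) + 2 * G (m2 - c * t) := by
    intro t ht
    have hx : c * t + m1 ∈ V := by
      have h := hV hm1 hm2 (by linarith [ht.2] : (0:ℝ) ≤ 1 - t) ht.1 (by ring)
      rw [smul_eq_mul, smul_eq_mul] at h
      have e : c * t + m1 = (1 - t) * m1 + t * m2 := by rw [hc]; ring
      rwa [e]
    have hy : m2 - c * t ∈ V := by
      have h := hV hm1 hm2 ht.1 (by linarith [ht.2] : (0:ℝ) ≤ 1 - t) (by ring)
      rw [smul_eq_mul, smul_eq_mul] at h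
      have e : m2 - c * t = t * m1 + (1 - t) * m2 := by rw [hc]; ring
      rwa [e]
    have h := hGL _ hx _ hy (1/2) ⟨by norm_num, by norm_num⟩
    have e1 : (1:ℝ)/2 * (c * t + m1) + (1 - 1/2) * (m2 - c * t) = (m1 + m2) / 2 := by
      ring
    rw [e1] at h
    norm_num at h
    linarith
  -- integrate
  have hmono : (∫ _ in (0:ℝ)..1, G ((m1 + m2) / 2)) ≤
      ∫ t in (0:ℝ)..1, (2 * G (c * t + m1) + 2 * G (m2 - c * t)) := by
    apply intervalIntegral.integral_mono_on (by norm_num)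
      intervalIntegrable_const ((h1.const_mul 2).add (h2.const_mul 2))
    exact key
  have i1 : (∫ t in (0:ℝ)..1, G (c * t + m1)) = c⁻¹ * ∫ x in m1..m2, G x := by
    have := intervalIntegral.integral_comp_mul_add G hcne m1 (a := 0) (b := 1)
    simpa [hc, smul_eq_mul] using this
  have i2 : (∫ t in (0:ℝ)..1, G (m2 - c * t)) = c⁻¹ * ∫ x in m1..m2, G x := by
    simp only [show ∀ t : ℝ, m2 - c * t = -c * t + m2 from fun t => by ring]
    rw [intervalIntegral.integral_comp_mul_add G (neg_ne_zero.mpr hcne) m2,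
      show -c * (0:ℝ) + m2 = m2 by ring, show -c * (1:ℝ) + m2 = m1 by rw [hc]; ring,
      intervalIntegral.integral_symm m1 m2, smul_eq_mul, inv_neg]
    ring
  have hsum : (∫ t in (0:ℝ)..1, (2 * G (c * t + m1) + 2 * G (m2 - c * t)))
      = (4 / c) * ∫ x in m1..m2, G x := by
    rw [intervalIntegral.integral_add (h1.const_mul 2) (h2.const_mul 2),
      intervalIntegral.integral_const_mul, intervalIntegral.integral_const_mul, i1, i2]
    field_simp
    ring
  have hconst : (∫ _ in (0:ℝ)..1, G ((m1 + m2) / 2)) = G ((m1 + m2) / 2) := by simp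
  rw [hconst, hsum] at hmono
  exact hmono
end

section
/- If G is a Godunova-Levin function on V and integrable on [m1, m2] ⊆ V with m1 < m2, then (1/(m2-m1)) ∫_{m1}^{m2} φ(x) G(x) dx ≤ (G(m1) + G(m2))/2, where φ(x) = (m2 - x)(x - m1)/(m2 - m1)². -/
open MeasureTheory intervalIntegral

theorem godunova_levin_right (V : Set ℝ) (hV : Convex ℝ V) (G : ℝ → ℝ)
    (hnonneg : ∀ x ∈ V, 0 ≤ G x)
    (hGL : ∀ a ∈ V, ∀ b ∈ V, ∀ ζ ∈ Set.Ioo (0:ℝ) 1,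
      G (ζ * a + (1 - ζ) * b) ≤ (1 / ζ) * G a + (1 / (1 - ζ)) * G b)
    (m1 m2 : ℝ) (hm1 : m1 ∈ V) (hm2 : m2 ∈ V) (hlt : m1 < m2)
    (hint : IntervalIntegrable G volume m1 m2) :
    (1 / (m2 - m1)) * ∫ x in m1..m2, ((m2 - x) * (x - m1) / (m2 - m1) ^ 2) * G x
      ≤ (G m1 + G m2) / 2 := by
  have hd : (0:ℝ) < m2 - m1 := by linarith
  have hsub : Set.Icc m1 m2 ⊆ V := by
    have := hV.ordConnected
    exact this.out hm1 hm2
  set h : ℝ → ℝ := fun x => ((m2 - x) * G m2 + (x - m1) * G m1) / (m2 - m1) with hh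
  have hφcont : ContinuousOn (fun x => (m2 - x) * (x - m1) / (m2 - m1) ^ 2)
      (Set.uIcc m1 m2) := by fun_prop
  have hint1 : IntervalIntegrable
      (fun x => ((m2 - x) * (x - m1) / (m2 - m1) ^ 2) * G x) volume m1 m2 :=
    hint.continuousOn_mul hφcont
  have hint2 : IntervalIntegrable h volume m1 m2 := by
    apply Continuous.intervalIntegrable
    have : (m2 - m1) ≠ 0 := hd.ne'
    fun_prop
  have hle : ∀ x ∈ Set.Icc m1 m2,
      ((m2 - x) * (x - m1) / (m2 - m1) ^ 2) * G x ≤ h x := by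
    intro x hx
    rcases eq_or_lt_of_le hx.1 with rfl | h1
    · have hG2 : 0 ≤ G m2 := hnonneg m2 hm2
      simp only [hh, sub_self, mul_zero, zero_mul, zero_div, add_zero]
      exact div_nonneg (mul_nonneg hd.le hG2) hd.le
    rcases eq_or_lt_of_le hx.2 with rfl | h2
    · have hG1 : 0 ≤ G m1 := hnonneg m1 hm1
      simp only [hh, sub_self, mul_zero, zero_mul, zero_div, zero_add]
      exact div_nonneg (mul_nonneg hd.le hG1) hd.le
    · set ζ : ℝ := (x - m1) / (m2 - m1) with hζ
      have hζ0 : 0 < ζ := div_pos (by linarith) hd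
      have hζ1 : ζ < 1 := by
        rw [hζ, div_lt_one hd]; linarith
      have hx' : ζ * m2 + (1 - ζ) * m1 = x := by
        have hmul : ζ * (m2 - m1) = x - m1 := div_mul_cancel₀ _ hd.ne'
        linear_combination hmul
      have key := hGL m2 hm2 m1 hm1 ζ ⟨hζ0, hζ1⟩
      rw [hx'] at key
      have h1ζ : 0 < 1 - ζ := by linarith
      calc ((m2 - x) * (x - m1) / (m2 - m1) ^ 2) * G x
          = (ζ * (1 - ζ)) * G x := by
            rw [hζ]; field_simp [hd.ne']; ring
        _ ≤ (ζ * (1 - ζ)) * ((1 / ζ) * G m2 + (1 / (1 - ζ)) * G m1) :=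
            mul_le_mul_of_nonneg_left key (by positivity)
        _ = (1 - ζ) * G m2 + ζ * G m1 := by
            field_simp [hζ0.ne', h1ζ.ne']
        _ = h x := by
            simp only [hh, hζ]; field_simp [hd.ne']; ring
  have hmono := intervalIntegral.integral_mono_on hlt.le hint1 hint2 hle
  have I1 : (∫ x in m1..m2, (m2 - x)) = (m2 - m1) ^ 2 / 2 := by
    rw [intervalIntegral.integral_sub intervalIntegrable_const intervalIntegrable_id]
    simp [integral_id, intervalIntegral.integral_const]
    ring
  have I2 : (∫ x in m1..m2, (x - m1)) = (m2 - m1) ^ 2 / 2 := by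
    rw [intervalIntegral.integral_sub intervalIntegrable_id intervalIntegrable_const]
    simp [integral_id, intervalIntegral.integral_const]
    ring
  have hIh : (∫ x in m1..m2, h x) = (m2 - m1) * (G m1 + G m2) / 2 := by
    simp only [hh]
    rw [intervalIntegral.integral_div]
    have e1 : (∫ x in m1..m2, ((m2 - x) * G m2 + (x - m1) * G m1))
        = (∫ x in m1..m2, (m2 - x)) * G m2 + (∫ x in m1..m2, (x - m1)) * G m1 := by
      rw [intervalIntegral.integral_add, intervalIntegral.integral_mul_const,
        intervalIntegral.integral_mul_const]
      · exact (Continuous.intervalIntegrable (by fun_prop) _ _)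
      · exact (Continuous.intervalIntegrable (by fun_prop) _ _)
    rw [e1, I1, I2]
    field_simp
    ring
  calc (1 / (m2 - m1)) * ∫ x in m1..m2, ((m2 - x) * (x - m1) / (m2 - m1) ^ 2) * G x
      ≤ (1 / (m2 - m1)) * ∫ x in m1..m2, h x :=
        mul_le_mul_of_nonneg_left hmono (by positivity)
    _ = (G m1 + G m2) / 2 := by
        rw [hIh]; field_simp
end

section
/- If G : V → ℝ is a nonnegative P-function, i.e., G(ζm1 + (1-ζ)m2) ≤ G(m1) + G(m2) for all m1, m2 ∈ V, ζ ∈ [0,1], and G is integrable on [m1, m2] with m1 < m2, then G((m1+m2)/2) ≤ (2/(m2-m1)) ∫_{m1}^{m2} G(x) dx ≤ 2[G(m1) + G(m2)]. -/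
open MeasureTheory intervalIntegral

theorem p_function_hh (V : Set ℝ) (hV : Convex ℝ V) (G : ℝ → ℝ)
    (hnonneg : ∀ x ∈ V, 0 ≤ G x)
    (hP : ∀ a ∈ V, ∀ b ∈ V, ∀ ζ ∈ Set.Icc (0:ℝ) 1,
      G (ζ * a + (1 - ζ) * b) ≤ G a + G b)
    (m1 m2 : ℝ) (hm1 : m1 ∈ V) (hm2 : m2 ∈ V) (hlt : m1 < m2)
    (hint : IntervalIntegrable G volume m1 m2) :
    G ((m1 + m2) / 2) ≤ (2 / (m2 - m1)) * ∫ x in m1..m2, G x ∧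
      (2 / (m2 - m1)) * ∫ x in m1..m2, G x ≤ 2 * (G m1 + G m2) := by
  have hne : (0:ℝ) < m2 - m1 := by linarith
  have hsub : Set.Icc m1 m2 ⊆ V := hV.ordConnected.out hm1 hm2
  have hG2 : IntervalIntegrable (fun x => G (m1 + m2 - x)) volume m1 m2 := by
    have h := (hint.comp_sub_left (m1 + m2))
    have e1 : m1 + m2 - m1 = m2 := by ring
    have e2 : m1 + m2 - m2 = m1 := by ring
    rw [e1, e2] at h
    exact h.symm
  constructor
  · have key : ∀ x ∈ Set.Icc m1 m2, G ((m1 + m2) / 2) ≤ G x + G (m1 + m2 - x) := by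
      intro x hx
      have hx' : m1 + m2 - x ∈ Set.Icc m1 m2 := ⟨by linarith [hx.2], by linarith [hx.1]⟩
      have h := hP x (hsub hx) (m1 + m2 - x) (hsub hx') (1/2) ⟨by norm_num, by norm_num⟩
      have e : (1/2 : ℝ) * x + (1 - 1/2) * (m1 + m2 - x) = (m1 + m2) / 2 := by ring
      rwa [e] at h
    have h1 : (m2 - m1) * G ((m1 + m2) / 2) ≤ ∫ x in m1..m2, (G x + G (m1 + m2 - x)) := by
      have h := intervalIntegral.integral_mono_on hlt.le intervalIntegrable_const
        (hint.add hG2) key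
      simpa [intervalIntegral.integral_const, smul_eq_mul] using h
    rw [intervalIntegral.integral_add hint hG2] at h1
    have h2 : (∫ x in m1..m2, G (m1 + m2 - x)) = ∫ x in m1..m2, G x := by
      have h := intervalIntegral.integral_comp_sub_left (a := m1) (b := m2) G (m1 + m2)
      have e1 : m1 + m2 - m1 = m2 := by ring
      have e2 : m1 + m2 - m2 = m1 := by ring
      rwa [e1, e2] at h
    rw [h2] at h1
    rw [div_mul_eq_mul_div, le_div_iff₀ hne]
    linarith
  · have key : ∀ x ∈ Set.Icc m1 m2, G x ≤ G m1 + G m2 := by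
      intro x hx
      obtain ⟨hx1, hx2⟩ := hx
      set ζ := (m2 - x) / (m2 - m1) with hζdef
      have hζ : ζ ∈ Set.Icc (0:ℝ) 1 :=
        ⟨div_nonneg (by linarith) hne.le, by rw [hζdef, div_le_one hne]; linarith⟩
      have h := hP m1 hm1 m2 hm2 ζ hζ
      have hx' : ζ * m1 + (1 - ζ) * m2 = x := by
        rw [hζdef]; field_simp; ring
      rwa [hx'] at h
    have h1 : (∫ x in m1..m2, G x) ≤ (m2 - m1) * (G m1 + G m2) := by
      have h := intervalIntegral.integral_mono_on hlt.le hint intervalIntegrable_const key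
      simp only [intervalIntegral.integral_const, smul_eq_mul] at h
      linarith
    rw [div_mul_eq_mul_div, div_le_iff₀ hne]
    nlinarith
end

section
/- If G : [0,∞) → [0,∞) is s-convex in the second sense for some 0 < s ≤ 1, and G is integrable on [m1, m2] with 0 ≤ m1 < m2, then 2^{s-1} G((m1+m2)/2) ≤ (1/(m2-m1)) ∫_{m1}^{m2} G(x) dx ≤ (G(m1) + G(m2))/(s+1). -/
open MeasureTheory intervalIntegral

theorem s_convex_hh (G : ℝ → ℝ) (s : ℝ) (hs0 : 0 < s) (hs1 : s ≤ 1)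
    (hnonneg : ∀ x, 0 ≤ x → 0 ≤ G x)
    (hsc : ∀ a b ζ1 ζ2 : ℝ, 0 ≤ a → 0 ≤ b → 0 ≤ ζ1 → 0 ≤ ζ2 → ζ1 + ζ2 = 1 →
      G (ζ1 * a + ζ2 * b) ≤ ζ1 ^ s * G a + ζ2 ^ s * G b)
    (m1 m2 : ℝ) (hm1 : 0 ≤ m1) (hlt : m1 < m2)
    (hint : IntervalIntegrable G volume m1 m2) :
    (2:ℝ) ^ (s - 1) * G ((m1 + m2) / 2) ≤ (1 / (m2 - m1)) * ∫ x in m1..m2, G x ∧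
      (1 / (m2 - m1)) * ∫ x in m1..m2, G x ≤ (G m1 + G m2) / (s + 1) := by
  have hd : (0:ℝ) < m2 - m1 := sub_pos.2 hlt
  set I := ∫ x in m1..m2, G x with hI
  -- reflection integrability and equality
  have hrefl_int : IntervalIntegrable (fun x => G (m1 + m2 - x)) volume m1 m2 := by
    have := (hint.comp_sub_left (m1 + m2)).symm
    simpa using this
  have hrefl_eq : (∫ x in m1..m2, G (m1 + m2 - x)) = I := by
    rw [intervalIntegral.integral_comp_sub_left G (m1 + m2)]
    norm_num [hI]
  -- LEFT INEQUALITY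
  have hleft : (2:ℝ) ^ (s - 1) * G ((m1 + m2) / 2) ≤ (1 / (m2 - m1)) * I := by
    have hmono : (∫ _x in m1..m2, G ((m1 + m2) / 2)) ≤
        ∫ x in m1..m2, ((1/2:ℝ) ^ s * G x + (1/2:ℝ) ^ s * G (m1 + m2 - x)) := by
      apply intervalIntegral.integral_mono_on hlt.le intervalIntegrable_const
        ((hint.const_mul _).add (hrefl_int.const_mul _))
      intro x hx
      have hx0 : 0 ≤ x := le_trans hm1 hx.1
      have hx1 : 0 ≤ m1 + m2 - x := by
        have := hx.2; linarith
      have key := hsc x (m1 + m2 - x) (1/2) (1/2) hx0 hx1 (by norm_num) (by norm_num)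
        (by norm_num)
      have harg : (1/2:ℝ) * x + (1/2:ℝ) * (m1 + m2 - x) = (m1 + m2) / 2 := by ring
      rwa [harg] at key
    rw [intervalIntegral.integral_const, intervalIntegral.integral_add
      (hint.const_mul _) (hrefl_int.const_mul _), intervalIntegral.integral_const_mul,
      intervalIntegral.integral_const_mul, hrefl_eq, smul_eq_mul] at hmono
    -- hmono : (m2 - m1) * G mid ≤ (1/2)^s * I + (1/2)^s * I
    have hpow : (2:ℝ) ^ (s - 1) * (2 * (1/2:ℝ) ^ s) = 1 := by
      have h2 : (1/2:ℝ) ^ s = (2:ℝ) ^ (-s) := by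
        rw [one_div, Real.inv_rpow (by norm_num : (0:ℝ) ≤ 2),
          ← Real.rpow_neg (by norm_num : (0:ℝ) ≤ 2)]
      rw [h2]
      have h1 : (2:ℝ) = (2:ℝ) ^ (1:ℝ) := by norm_num
      calc (2:ℝ) ^ (s - 1) * (2 * (2:ℝ) ^ (-s))
          = (2:ℝ) ^ (s - 1) * ((2:ℝ) ^ (1:ℝ) * (2:ℝ) ^ (-s)) := by rw [← h1]
        _ = (2:ℝ) ^ ((s - 1) + (1 + -s)) := by
            rw [← Real.rpow_add (by norm_num : (0:ℝ) < 2),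
              ← Real.rpow_add (by norm_num : (0:ℝ) < 2)]
        _ = 1 := by rw [show s - 1 + (1 + -s) = 0 by ring, Real.rpow_zero]
    have hc : (0:ℝ) < (2:ℝ) ^ (s - 1) := Real.rpow_pos_of_pos (by norm_num) _
    have := mul_le_mul_of_nonneg_left hmono (le_of_lt (div_pos hc hd))
    calc (2:ℝ) ^ (s - 1) * G ((m1 + m2) / 2)
        = (2:ℝ) ^ (s - 1) / (m2 - m1) * ((m2 - m1) * G ((m1 + m2) / 2)) := by
          field_simp
      _ ≤ (2:ℝ) ^ (s - 1) / (m2 - m1) * ((1/2:ℝ) ^ s * I + (1/2:ℝ) ^ s * I) := this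
      _ = (1 / (m2 - m1)) * I * ((2:ℝ) ^ (s - 1) * (2 * (1/2:ℝ) ^ s)) := by ring
      _ = (1 / (m2 - m1)) * I := by rw [hpow, mul_one]
  -- RIGHT INEQUALITY
  have hright : (1 / (m2 - m1)) * I ≤ (G m1 + G m2) / (s + 1) := by
    -- substitution
    have hsub : (∫ t in (0:ℝ)..1, G ((m2 - m1) * t + m1)) = (m2 - m1)⁻¹ * I := by
      rw [intervalIntegral.integral_comp_mul_add G (ne_of_gt hd) m1]
      norm_num [smul_eq_mul, hI]
    have hJ : IntervalIntegrable (fun t => G ((m2 - m1) * t + m1)) volume 0 1 := by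
      have h1 := (hint.comp_add_right m1).comp_mul_left (c := m2 - m1)
      simpa [sub_self, div_self (ne_of_gt hd)] using h1
    have hts : IntervalIntegrable (fun t : ℝ => t ^ s) volume 0 1 :=
      intervalIntegrable_rpow (Or.inl hs0.le)
    have h1ts : IntervalIntegrable (fun t : ℝ => (1 - t) ^ s) volume 0 1 := by
      have := ((intervalIntegrable_rpow (r := s) (a := 0) (b := 1)
        (Or.inl hs0.le)).comp_sub_left 1).symm
      simpa using this
    have hmono : (∫ t in (0:ℝ)..1, G ((m2 - m1) * t + m1)) ≤
        ∫ t in (0:ℝ)..1, (t ^ s * G m2 + (1 - t) ^ s * G m1) := by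
      apply intervalIntegral.integral_mono_on (by norm_num) hJ
        ((hts.mul_const _).add (h1ts.mul_const _))
      intro t ht
      have ht0 : 0 ≤ t := ht.1
      have ht1 : 0 ≤ 1 - t := by linarith [ht.2]
      have key := hsc m2 m1 t (1 - t) (le_trans hm1 hlt.le) hm1 ht0 ht1 (by ring)
      have harg : t * m2 + (1 - t) * m1 = (m2 - m1) * t + m1 := by ring
      rwa [harg] at key
    have hint_ts : (∫ t in (0:ℝ)..1, t ^ s) = 1 / (s + 1) := by
      rw [integral_rpow (Or.inl (by linarith : (-1:ℝ) < s))]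
      rw [Real.one_rpow, Real.zero_rpow (by linarith : s + 1 ≠ 0)]
      norm_num
    have hint_1ts : (∫ t in (0:ℝ)..1, (1 - t) ^ s) = 1 / (s + 1) := by
      rw [intervalIntegral.integral_comp_sub_left (fun x : ℝ => x ^ s) 1]
      norm_num [hint_ts]
    rw [hsub] at hmono
    rw [intervalIntegral.integral_add (hts.mul_const _) (h1ts.mul_const _),
      intervalIntegral.integral_mul_const, intervalIntegral.integral_mul_const,
      hint_ts, hint_1ts] at hmono
    calc (1 / (m2 - m1)) * I = (m2 - m1)⁻¹ * I := by rw [one_div]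
      _ ≤ 1 / (s + 1) * G m2 + 1 / (s + 1) * G m1 := hmono
      _ = (G m1 + G m2) / (s + 1) := by ring
  exact ⟨hleft, hright⟩
end

section
/- Let 0 < s < 1, and define G : [0,∞) → ℝ by G(0) = c1 and G(m) = c2·m^s + c3 for m > 0. If c2 ≥ 0 and 0 ≤ c3 ≤ c1, then G is s-convex in the second sense. -/
theorem s_convex_example (s c1 c2 c3 : ℝ) (hs0 : 0 < s) (hs1 : s < 1)
    (hc2 : 0 ≤ c2) (hc3 : 0 ≤ c3) (hc31 : c3 ≤ c1)
    (G : ℝ → ℝ) (hG : ∀ m : ℝ, G m = if m = 0 then c1 else c2 * m ^ s + c3) :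
    ∀ a b ζ1 ζ2 : ℝ, 0 ≤ a → 0 ≤ b → 0 ≤ ζ1 → 0 ≤ ζ2 → ζ1 + ζ2 = 1 →
      G (ζ1 * a + ζ2 * b) ≤ ζ1 ^ s * G a + ζ2 ^ s * G b := by
  intro a b ζ1 ζ2 ha hb h1 h2 hsum
  have hc1 : 0 ≤ c1 := le_trans hc3 hc31
  -- ζ ≤ ζ^s for 0 ≤ ζ ≤ 1
  have hpow : ∀ ζ : ℝ, 0 ≤ ζ → ζ ≤ 1 → ζ ≤ ζ ^ s := by
    intro ζ hζ0 hζ1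
    rcases eq_or_lt_of_le hζ0 with h | h
    · simp [← h, Real.rpow_nonneg]
    · calc ζ = ζ ^ (1 : ℝ) := (Real.rpow_one ζ).symm
        _ ≤ ζ ^ s := Real.rpow_le_rpow_of_exponent_ge h hζ1 hs1.le
  have hζ1le : ζ1 ≤ 1 := by linarith
  have hζ2le : ζ2 ≤ 1 := by linarith
  have hsums : 1 ≤ ζ1 ^ s + ζ2 ^ s := by
    have := hpow ζ1 h1 hζ1le
    have := hpow ζ2 h2 hζ2le
    linarith
  -- lower bound for G
  have hGlb : ∀ x : ℝ, c2 * x ^ s + c3 ≤ G x := by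
    intro x
    rw [hG]
    split
    · next h => subst h; rw [Real.zero_rpow hs0.ne']; linarith
    · exact le_rfl
  -- subadditivity of x ↦ x^s on nonneg reals
  have hsub : ∀ x y : ℝ, 0 ≤ x → 0 ≤ y → (x + y) ^ s ≤ x ^ s + y ^ s := by
    intro x y hx hy
    have h := NNReal.rpow_add_le_add_rpow x.toNNReal y.toNNReal hs0.le hs1.le
    have h' := (NNReal.coe_le_coe).2 h
    push_cast at h'
    rw [Real.coe_toNNReal x hx, Real.coe_toNNReal y hy] at h'
    exact h'
  by_cases hz : ζ1 * a + ζ2 * b = 0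
  · rw [hG, if_pos hz]
    have ha0 : ζ1 * a = 0 := by nlinarith [mul_nonneg h1 ha, mul_nonneg h2 hb]
    have hb0 : ζ2 * b = 0 := by nlinarith [mul_nonneg h1 ha, mul_nonneg h2 hb]
    rcases mul_eq_zero.1 ha0 with hζ10 | ha0'
    · have hζ21 : ζ2 = 1 := by linarith
      have hb0' : b = 0 := by
        rcases mul_eq_zero.1 hb0 with h | h
        · exact absurd h (by norm_num [hζ21])
        · exact h
      rw [hζ10, hζ21, hb0', Real.zero_rpow hs0.ne', Real.one_rpow, hG 0, if_pos rfl]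
      ring_nf
      linarith
    · rcases mul_eq_zero.1 hb0 with hζ20 | hb0'
      · have hζ11 : ζ1 = 1 := by linarith
        rw [hζ20, hζ11, ha0', Real.zero_rpow hs0.ne', Real.one_rpow, hG 0, if_pos rfl]
        ring_nf
        linarith
      · rw [ha0', hb0', hG 0, if_pos rfl]
        nlinarith [hsums, hc1]
  · rw [hG, if_neg hz]
    have key : (ζ1 * a + ζ2 * b) ^ s ≤ ζ1 ^ s * a ^ s + ζ2 ^ s * b ^ s := by
      calc (ζ1 * a + ζ2 * b) ^ s ≤ (ζ1 * a) ^ s + (ζ2 * b) ^ s :=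
            hsub _ _ (mul_nonneg h1 ha) (mul_nonneg h2 hb)
        _ = ζ1 ^ s * a ^ s + ζ2 ^ s * b ^ s := by
            rw [Real.mul_rpow h1 ha, Real.mul_rpow h2 hb]
    have hGa := hGlb a
    have hGb := hGlb b
    have hp1 : 0 ≤ ζ1 ^ s := Real.rpow_nonneg h1 s
    have hp2 : 0 ≤ ζ2 ^ s := Real.rpow_nonneg h2 s
    calc c2 * (ζ1 * a + ζ2 * b) ^ s + c3
        ≤ c2 * (ζ1 ^ s * a ^ s + ζ2 ^ s * b ^ s) + (ζ1 ^ s + ζ2 ^ s) * c3 := by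
          nlinarith
      _ = ζ1 ^ s * (c2 * a ^ s + c3) + ζ2 ^ s * (c2 * b ^ s + c3) := by ring
      _ ≤ ζ1 ^ s * G a + ζ2 ^ s * G b := by
          have := mul_le_mul_of_nonneg_left hGa hp1
          have := mul_le_mul_of_nonneg_left hGb hp2
          linarith
end

section
/- Let G : V ⊆ ℝ → ℝ be differentiable on the interior of V with m1, m2 in the interior, m1 < m2, and G' integrable. If |G'| is convex on [m1, m2], then |(G(m1)+G(m2))/2 - (1/(m2-m1)) ∫_{m1}^{m2} G(x) dx| ≤ ((m2-m1)/8)·(|G'(m1)| + |G'(m2)|). -/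
open MeasureTheory intervalIntegral

theorem trapezoid_abs_deriv_convex (m1 m2 : ℝ) (G : ℝ → ℝ) (hlt : m1 < m2)
    (V : Set ℝ) (hV : IsOpen V) (hVI : Set.Icc m1 m2 ⊆ V)
    (hdiff : ∀ x ∈ V, DifferentiableAt ℝ G x)
    (hG' : IntervalIntegrable (deriv G) volume m1 m2)
    (hconv : ConvexOn ℝ (Set.Icc m1 m2) (fun x => |deriv G x|)) :
    |(G m1 + G m2) / 2 - (1 / (m2 - m1)) * ∫ x in m1..m2, G x| ≤
      ((m2 - m1) / 8) * (|deriv G m1| + |deriv G m2|) := by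
  have h0 : (0:ℝ) < m2 - m1 := by linarith
  set c : ℝ := (m1 + m2) / 2 with hc
  set a : ℝ := |deriv G m1| with ha
  set b : ℝ := |deriv G m2| with hb
  have huIcc : Set.uIcc m1 m2 = Set.Icc m1 m2 := Set.uIcc_of_le hlt.le
  -- derivatives
  have hder : ∀ x ∈ Set.uIcc m1 m2, HasDerivAt G (deriv G x) x := by
    intro x hx
    rw [huIcc] at hx
    exact (hdiff x (hVI hx)).hasDerivAt
  have hu : ∀ x ∈ Set.uIcc m1 m2, HasDerivAt (fun y : ℝ => y - c) ((fun _ : ℝ => (1:ℝ)) x) x :=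
    fun x _ => (hasDerivAt_id x).sub_const c
  have hGc : ContinuousOn G (Set.uIcc m1 m2) := by
    intro x hx
    rw [huIcc] at hx
    exact ((hdiff x (hVI hx)).continuousAt).continuousWithinAt
  have hGint : IntervalIntegrable G volume m1 m2 := hGc.intervalIntegrable
  have ibp := intervalIntegral.integral_mul_deriv_eq_deriv_mul hu hder
      intervalIntegrable_const hG'
  simp only [one_mul] at ibp
  -- ibp : ∫ x in m1..m2, (x - c) * deriv G x = (m2 - c) * G m2 - (m1 - c) * G m1 - ∫ G
  have key : (G m1 + G m2) / 2 - (1 / (m2 - m1)) * ∫ x in m1..m2, G x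
      = (1 / (m2 - m1)) * ∫ x in m1..m2, (x - c) * deriv G x := by
    rw [ibp, hc]
    field_simp
    ring
  -- antiderivative on the left half
  set F1 : ℝ → ℝ := fun y =>
      ((((a/3*y^3 - a*(c+m2)/2*y^2) + a*c*m2*y) - b/3*y^3) + b*(c+m1)/2*y^2) - b*c*m1*y
    with hF1def
  have hF1 : ∀ x : ℝ, HasDerivAt F1 ((c - x) * ((m2 - x) * a + (x - m1) * b)) x := by
    intro x
    have hx1 : HasDerivAt (fun y : ℝ => y) 1 x := hasDerivAt_id x
    have hx2 : HasDerivAt (fun y : ℝ => y^2) (2*x) x := by simpa using hasDerivAt_pow 2 x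
    have hx3 : HasDerivAt (fun y : ℝ => y^3) (3*x^2) x := by simpa using hasDerivAt_pow 3 x
    have H := ((((((hx3.const_mul (a/3)).sub (hx2.const_mul (a*(c+m2)/2))).add
        (hx1.const_mul (a*c*m2))).sub (hx3.const_mul (b/3))).add
        (hx2.const_mul (b*(c+m1)/2))).sub (hx1.const_mul (b*c*m1)))
    refine H.congr_deriv ?_
    ring
  have hcond : m1 ≤ c := by rw [hc]; linarith
  have hcond2 : c ≤ m2 := by rw [hc]; linarith
  -- the comparison integrand
  set L : ℝ → ℝ := fun x => |x - c| * ((m2 - x) * a + (x - m1) * b) with hLdef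
  have hLcont : Continuous L := by
    rw [hLdef]; fun_prop
  have I1 : ∫ x in m1..c, L x = F1 c - F1 m1 := by
    rw [intervalIntegral.integral_congr
        (g := fun x => (c - x) * ((m2 - x) * a + (x - m1) * b))
        (by
          intro x hx
          rw [Set.uIcc_of_le hcond] at hx
          have : x - c ≤ 0 := by linarith [hx.2]
          simp only [hLdef]
          rw [abs_of_nonpos this]
          ring)]
    exact intervalIntegral.integral_eq_sub_of_hasDerivAt (fun x _ => hF1 x)
      (Continuous.intervalIntegrable (by fun_prop) _ _)
  have I2 : ∫ x in c..m2, L x = F1 c - F1 m2 := by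
    rw [intervalIntegral.integral_congr
        (g := fun x => (x - c) * ((m2 - x) * a + (x - m1) * b))
        (by
          intro x hx
          rw [Set.uIcc_of_le hcond2] at hx
          have : 0 ≤ x - c := by linarith [hx.1]
          simp only [hLdef]
          rw [abs_of_nonneg this])]
    have := intervalIntegral.integral_eq_sub_of_hasDerivAt
      (f := fun y => -F1 y)
      (f' := fun x => (x - c) * ((m2 - x) * a + (x - m1) * b))
      (a := c) (b := m2)
      (fun x _ => by
        have := (hF1 x).neg
        refine this.congr_deriv ?_
        ring)
      (Continuous.intervalIntegrable (by fun_prop) _ _)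
    rw [this]; ring
  have Jsplit : ∫ x in m1..m2, L x = (∫ x in m1..c, L x) + ∫ x in c..m2, L x := by
    rw [intervalIntegral.integral_add_adjacent_intervals
      (hLcont.intervalIntegrable _ _) (hLcont.intervalIntegrable _ _)]
  have Jval : ∫ x in m1..m2, L x = (m2 - m1)^3 / 8 * (a + b) := by
    rw [Jsplit, I1, I2, hF1def, hc]
    ring
  -- pointwise bound from convexity
  have hle : ∀ x ∈ Set.Icc m1 m2, |(x - c) * deriv G x| ≤ L x / (m2 - m1) := by
    intro x hx
    have ht1 : (0:ℝ) ≤ (m2 - x) / (m2 - m1) := by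
      apply div_nonneg _ h0.le; linarith [hx.2]
    have ht2 : (0:ℝ) ≤ (x - m1) / (m2 - m1) := by
      apply div_nonneg _ h0.le; linarith [hx.1]
    have hts : (m2 - x) / (m2 - m1) + (x - m1) / (m2 - m1) = 1 := by
      field_simp
      ring
    have hcv := hconv.2 (Set.left_mem_Icc.mpr hlt.le) (Set.right_mem_Icc.mpr hlt.le)
      ht1 ht2 hts
    have hxeq : (m2 - x) / (m2 - m1) * m1 + (x - m1) / (m2 - m1) * m2 = x := by
      field_simp
      ring
    simp only [smul_eq_mul] at hcv
    rw [hxeq] at hcv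
    have hGb : |deriv G x| ≤ ((m2 - x) * a + (x - m1) * b) / (m2 - m1) := by
      calc |deriv G x| ≤ (m2 - x) / (m2 - m1) * a + (x - m1) / (m2 - m1) * b := hcv
        _ = ((m2 - x) * a + (x - m1) * b) / (m2 - m1) := by ring
    calc |(x - c) * deriv G x| = |x - c| * |deriv G x| := abs_mul _ _
      _ ≤ |x - c| * (((m2 - x) * a + (x - m1) * b) / (m2 - m1)) :=
        mul_le_mul_of_nonneg_left hGb (abs_nonneg _)
      _ = L x / (m2 - m1) := by rw [hLdef]; ring
  -- integrability facts
  have hprod : IntervalIntegrable (fun x => (x - c) * deriv G x) volume m1 m2 :=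
    hG'.continuousOn_mul (by fun_prop)
  have habs : IntervalIntegrable (fun x => |(x - c) * deriv G x|) volume m1 m2 := hprod.abs
  have hLint : IntervalIntegrable (fun x => L x / (m2 - m1)) volume m1 m2 :=
    Continuous.intervalIntegrable (by fun_prop) _ _
  -- assemble
  rw [key, abs_mul, abs_of_pos (by positivity : (0:ℝ) < 1 / (m2 - m1))]
  calc (1 / (m2 - m1)) * |∫ x in m1..m2, (x - c) * deriv G x|
      ≤ (1 / (m2 - m1)) * ∫ x in m1..m2, |(x - c) * deriv G x| := by
        gcongr
        exact intervalIntegral.abs_integral_le_integral_abs hlt.le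
    _ ≤ (1 / (m2 - m1)) * ∫ x in m1..m2, L x / (m2 - m1) := by
        apply mul_le_mul_of_nonneg_left _ (by positivity)
        exact intervalIntegral.integral_mono_on hlt.le habs hLint hle
    _ = (1 / (m2 - m1)) * ((∫ x in m1..m2, L x) / (m2 - m1)) := by
        rw [intervalIntegral.integral_div]
    _ = ((m2 - m1) / 8) * (a + b) := by
        rw [Jval]; field_simp
end

section
/- Let G : V ⊆ ℝ → ℝ be differentiable with |G'|^q convex on [m1, m2] for some q > 1 with 1/p + 1/q = 1. Then |(G(m1)+G(m2))/2 - (1/(m2-m1)) ∫_{m1}^{m2} G(x) dx| ≤ ((m2-m1)/2)·(1/(p+1))^{1/p}·[(|G'(m1)|^q + |G'(m2)|^q)/2]^{1/q}. -/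
open MeasureTheory intervalIntegral

lemma convex_pointwise_bound {m1 m2 : ℝ} (hlt : m1 < m2) {f : ℝ → ℝ}
    (hconv : ConvexOn ℝ (Set.Icc m1 m2) f) {x : ℝ} (hx : x ∈ Set.Icc m1 m2) :
    f x ≤ (m2 - x) / (m2 - m1) * f m1 + (x - m1) / (m2 - m1) * f m2 := by
  have hd : (0:ℝ) < m2 - m1 := by linarith
  obtain ⟨hx1, hx2⟩ := hx
  have ha : (0:ℝ) ≤ (m2 - x) / (m2 - m1) := div_nonneg (by linarith) hd.le
  have hb : (0:ℝ) ≤ (x - m1) / (m2 - m1) := div_nonneg (by linarith) hd.le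
  have hab : (m2 - x) / (m2 - m1) + (x - m1) / (m2 - m1) = 1 := by
    field_simp
    ring
  have h := hconv.2 (Set.left_mem_Icc.2 hlt.le) (Set.right_mem_Icc.2 hlt.le) ha hb hab
  simp only [smul_eq_mul] at h
  have hxeq : (m2 - x) / (m2 - m1) * m1 + (x - m1) / (m2 - m1) * m2 = x := by
    field_simp
    ring
  rwa [hxeq] at h

theorem trapezoid_holder (m1 m2 : ℝ) (G : ℝ → ℝ) (hlt : m1 < m2)
    (V : Set ℝ) (hV : IsOpen V) (hVI : Set.Icc m1 m2 ⊆ V)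
    (hdiff : ∀ x ∈ V, DifferentiableAt ℝ G x)
    (hG' : IntervalIntegrable (deriv G) volume m1 m2)
    (p q : ℝ) (hp : 1 < p) (hq : 1 < q) (hpq : 1 / p + 1 / q = 1)
    (hconv : ConvexOn ℝ (Set.Icc m1 m2) (fun x => |deriv G x| ^ q)) :
    |(G m1 + G m2) / 2 - (1 / (m2 - m1)) * ∫ x in m1..m2, G x| ≤
      ((m2 - m1) / 2) * (1 / (p + 1)) ^ (1 / p) *
        ((|deriv G m1| ^ q + |deriv G m2| ^ q) / 2) ^ (1 / q) := by
  have hd : (0:ℝ) < m2 - m1 := by linarith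
  set d : ℝ := m2 - m1 with hdef
  set mid : ℝ := (m1 + m2) / 2 with hmid
  set c : ℝ := d / 2 with hcdef
  have hc : (0:ℝ) < c := by positivity
  set A : ℝ := |deriv G m1| ^ q with hA
  set B : ℝ := |deriv G m2| ^ q with hB
  have hA0 : 0 ≤ A := Real.rpow_nonneg (abs_nonneg _) q
  have hB0 : 0 ≤ B := Real.rpow_nonneg (abs_nonneg _) q
  have hp0 : (0:ℝ) < p := by linarith
  have hq0 : (0:ℝ) < q := by linarith
  have hIcc : Set.uIcc m1 m2 = Set.Icc m1 m2 := Set.uIcc_of_le hlt.le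
  -- derivative facts
  have hGat : ∀ x ∈ Set.uIcc m1 m2, HasDerivAt G (deriv G x) x := fun x hx =>
    (hdiff x (hVI (hIcc ▸ hx))).hasDerivAt
  have hKat : ∀ x ∈ Set.uIcc m1 m2, HasDerivAt (fun y => y - mid) 1 x := fun x _ =>
    (hasDerivAt_id x).sub_const mid
  have hone : IntervalIntegrable (fun _ : ℝ => (1:ℝ)) volume m1 m2 :=
    intervalIntegrable_const
  -- integration by parts
  have ibp := integral_mul_deriv_eq_deriv_mul hKat hGat hone hG'
  -- pointwise convexity bound
  have hcb : ∀ x ∈ Set.Icc m1 m2,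
      |deriv G x| ^ q ≤ (m2 - x) / d * A + (x - m1) / d * B := fun x hx =>
    convex_pointwise_bound hlt hconv hx
  -- boundedness of deriv G on Icc
  have hMq : ∀ x ∈ Set.Icc m1 m2, |deriv G x| ^ q ≤ max A B := by
    intro x hx
    refine (hcb x hx).trans ?_
    obtain ⟨hx1, hx2⟩ := hx
    have h1 : (m2 - x) / d * A ≤ (m2 - x) / d * max A B :=
      mul_le_mul_of_nonneg_left (le_max_left _ _) (div_nonneg (by linarith) hd.le)
    have h2 : (x - m1) / d * B ≤ (x - m1) / d * max A B :=
      mul_le_mul_of_nonneg_left (le_max_right _ _) (div_nonneg (by linarith) hd.le)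
    have h3 : (m2 - x) / d + (x - m1) / d = 1 := by field_simp; linarith
    nlinarith [le_max_left A B, hA0]
  have hGbd : ∀ x ∈ Set.Icc m1 m2, |deriv G x| ≤ (max A B) ^ (1/q) := by
    intro x hx
    have h0 : 0 ≤ max A B := le_trans hA0 (le_max_left _ _)
    have h2 := Real.rpow_le_rpow (Real.rpow_nonneg (abs_nonneg _) q) (hMq x hx)
      (by positivity : (0:ℝ) ≤ 1/q)
    rwa [← Real.rpow_mul (abs_nonneg _), mul_one_div, div_self hq0.ne',
      Real.rpow_one] at h2
  -- key identity via integration by parts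
  have key : (G m1 + G m2) / 2 - (1 / d) * ∫ x in m1..m2, G x
      = (1 / d) * ∫ x in m1..m2, (x - mid) * deriv G x := by
    rw [ibp]
    simp only [one_mul, hmid, hdef]
    have hne : m2 - m1 ≠ 0 := by linarith
    field_simp
    ring
  -- finite measure instance
  haveI : IsFiniteMeasure (volume.restrict (Set.Ioc m1 m2)) :=
    ⟨by rw [Measure.restrict_apply_univ]; exact measure_Ioc_lt_top⟩
  -- Memℒp facts
  have hKmem : MemLp (fun x => x - mid) (ENNReal.ofReal p)
      (volume.restrict (Set.Ioc m1 m2)) := by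
    refine MemLp.mono_exponent (q := ⊤) ?_ le_top
    refine memLp_top_of_bound ((measurable_id.sub_const mid).aestronglyMeasurable) c ?_
    filter_upwards [ae_restrict_mem measurableSet_Ioc] with x hx
    rw [Real.norm_eq_abs, abs_le]
    constructor
    · simp only [hmid, hcdef, hdef]; linarith [hx.1]
    · simp only [hmid, hcdef, hdef]; linarith [hx.2]
  have hGmem : MemLp (deriv G) (ENNReal.ofReal q)
      (volume.restrict (Set.Ioc m1 m2)) := by
    refine MemLp.mono_exponent (q := ⊤) ?_ le_top
    refine memLp_top_of_bound ((measurable_deriv G).aestronglyMeasurable)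
      ((max A B) ^ (1/q)) ?_
    filter_upwards [ae_restrict_mem measurableSet_Ioc] with x hx
    rw [Real.norm_eq_abs]
    exact hGbd x (Set.Ioc_subset_Icc_self hx)
  have hpq' : Real.HolderConjugate p q := Real.holderConjugate_iff.mpr ⟨hp, by simpa [one_div] using hpq⟩
  set Ip : ℝ := ∫ x in m1..m2, |x - mid| ^ p with hIpdef
  set Iq : ℝ := ∫ x in m1..m2, |deriv G x| ^ q with hIqdef
  -- Hölder chain
  have hchain : |∫ x in m1..m2, (x - mid) * deriv G x| ≤ Ip ^ (1/p) * Iq ^ (1/q) := by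
    have h1 : |∫ x in m1..m2, (x - mid) * deriv G x|
        ≤ ∫ x in m1..m2, |(x - mid) * deriv G x| := abs_integral_le_integral_abs hlt.le
    have h2 : ∫ x in m1..m2, |(x - mid) * deriv G x|
        = ∫ x in Set.Ioc m1 m2, ‖x - mid‖ * ‖deriv G x‖ := by
      rw [integral_of_le hlt.le]
      simp only [Real.norm_eq_abs, abs_mul]
    have h3 := integral_mul_norm_le_Lp_mul_Lq (μ := volume.restrict (Set.Ioc m1 m2))
      hpq' hKmem hGmem
    have h4 : (∫ x in Set.Ioc m1 m2, ‖x - mid‖ ^ p) = Ip := by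
      rw [hIpdef, integral_of_le hlt.le]
      simp only [Real.norm_eq_abs]
    have h5 : (∫ x in Set.Ioc m1 m2, ‖deriv G x‖ ^ q) = Iq := by
      rw [hIqdef, integral_of_le hlt.le]
      simp only [Real.norm_eq_abs]
    calc |∫ x in m1..m2, (x - mid) * deriv G x|
        ≤ ∫ x in m1..m2, |(x - mid) * deriv G x| := h1
      _ = ∫ x in Set.Ioc m1 m2, ‖x - mid‖ * ‖deriv G x‖ := h2
      _ ≤ (∫ x in Set.Ioc m1 m2, ‖x - mid‖ ^ p) ^ (1/p)
          * (∫ x in Set.Ioc m1 m2, ‖deriv G x‖ ^ q) ^ (1/q) := h3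
      _ = Ip ^ (1/p) * Iq ^ (1/q) := by rw [h4, h5]
  -- compute Ip
  have habs_cont : Continuous (fun x : ℝ => |x - mid| ^ p) :=
    ((continuous_id.sub continuous_const).abs).rpow_const (fun x => Or.inr hp0.le)
  have hIp : Ip = 2 * c ^ (p + 1) / (p + 1) := by
    have hmidmem : m1 ≤ mid := by simp only [hmid]; linarith
    have hmidmem2 : mid ≤ m2 := by simp only [hmid]; linarith
    have hri : ∫ x in mid..m2, |x - mid| ^ p = c ^ (p + 1) / (p + 1) := by
      have e1 : ∫ x in mid..m2, |x - mid| ^ p = ∫ x in mid..m2, (x - mid) ^ p := by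
        apply integral_congr
        intro x hx
        rw [Set.uIcc_of_le hmidmem2] at hx
        show |x - mid| ^ p = (x - mid) ^ p
        rw [abs_of_nonneg (by linarith [hx.1])]
      have e2 : ∫ x in mid..m2, (x - mid) ^ p = ∫ x in (0:ℝ)..c, x ^ p := by
        rw [integral_comp_sub_right (fun t => t ^ p) mid]
        norm_num
        congr 1 <;> simp only [hmid, hcdef, hdef] <;> ring
      have e3 : ∫ x in (0:ℝ)..c, x ^ p = c ^ (p + 1) / (p + 1) := by
        rw [integral_rpow (Or.inl (by linarith : (-1:ℝ) < p))]
        rw [Real.zero_rpow (by linarith : p + 1 ≠ 0)]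
        ring
      rw [e1, e2, e3]
    have hli : ∫ x in m1..mid, |x - mid| ^ p = c ^ (p + 1) / (p + 1) := by
      have e1 : ∫ x in m1..mid, |x - mid| ^ p = ∫ x in m1..mid, (mid - x) ^ p := by
        apply integral_congr
        intro x hx
        rw [Set.uIcc_of_le hmidmem] at hx
        show |x - mid| ^ p = (mid - x) ^ p
        rw [abs_of_nonpos (by linarith [hx.2]), neg_sub]
      have e2 : ∫ x in m1..mid, (mid - x) ^ p = ∫ x in (0:ℝ)..c, x ^ p := by
        rw [integral_comp_sub_left (fun t => t ^ p) mid]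
        congr 1 <;> simp only [hmid, hcdef, hdef] <;> ring
      have e3 : ∫ x in (0:ℝ)..c, x ^ p = c ^ (p + 1) / (p + 1) := by
        rw [integral_rpow (Or.inl (by linarith : (-1:ℝ) < p))]
        rw [Real.zero_rpow (by linarith : p + 1 ≠ 0)]
        ring
      rw [e1, e2, e3]
    have hint1 : IntervalIntegrable (fun x : ℝ => |x - mid| ^ p) volume m1 mid :=
      habs_cont.intervalIntegrable m1 mid
    have hint2 : IntervalIntegrable (fun x : ℝ => |x - mid| ^ p) volume mid m2 :=
      habs_cont.intervalIntegrable mid m2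
    have hsum := integral_add_adjacent_intervals hint1 hint2
    rw [hIpdef, ← hsum, hli, hri]
    ring
  -- integrability of |G'|^q
  have hq_int : IntervalIntegrable (fun x => |deriv G x| ^ q) volume m1 m2 := by
    rw [intervalIntegrable_iff_integrableOn_Ioc_of_le hlt.le]
    apply Measure.integrableOn_of_bounded (M := max A B) measure_Ioc_lt_top.ne
      (((measurable_deriv G).abs.pow_const q).aestronglyMeasurable)
    filter_upwards [ae_restrict_mem measurableSet_Ioc] with x hx
    rw [Real.norm_eq_abs, abs_of_nonneg (Real.rpow_nonneg (abs_nonneg _) q)]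
    exact hMq x (Set.Ioc_subset_Icc_self hx)
  have hlin_cont : Continuous (fun x : ℝ => (m2 - x) / d * A + (x - m1) / d * B) := by
    fun_prop
  -- Hadamard-type bound
  have hIq_le : Iq ≤ d * ((A + B) / 2) := by
    have hmono := integral_mono_on hlt.le hq_int (hlin_cont.intervalIntegrable m1 m2) hcb
    have hlin_eval : ∫ x in m1..m2, ((m2 - x) / d * A + (x - m1) / d * B)
        = d * ((A + B) / 2) := by
      have h1 : (fun x : ℝ => (m2 - x) / d * A + (x - m1) / d * B)
          = fun x : ℝ => ((B - A) / d) * x + (m2 * A - m1 * B) / d := by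
        funext x; field_simp; ring
      rw [h1, integral_add (f := fun x : ℝ => (B - A) / d * x) (g := fun _ : ℝ => (m2 * A - m1 * B) / d) (((continuous_const.mul continuous_id').intervalIntegrable m1 m2))
        (intervalIntegrable_const), intervalIntegral.integral_const_mul, _root_.integral_id, intervalIntegral.integral_const]
      simp only [smul_eq_mul, hdef]
      have hne : m2 - m1 ≠ 0 := by linarith
      field_simp
      ring
    rw [hIqdef]
    calc (∫ x in m1..m2, |deriv G x| ^ q)
        ≤ ∫ x in m1..m2, ((m2 - x) / d * A + (x - m1) / d * B) := hmono
      _ = d * ((A + B) / 2) := hlin_eval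
  have hIq0 : 0 ≤ Iq :=
    integral_nonneg hlt.le (fun x _ => Real.rpow_nonneg (abs_nonneg _) q)
  -- rpow evaluations
  have hIp_eval : Ip ^ (1/p) = c * (d ^ (1/p) * (1/(p+1)) ^ (1/p)) := by
    have h2c : Ip = c ^ p * (d * (1/(p+1))) := by
      rw [hIp, Real.rpow_add hc, Real.rpow_one]
      have : d = 2 * c := by rw [hcdef]; ring
      rw [this]
      field_simp
    rw [h2c, Real.mul_rpow (Real.rpow_nonneg hc.le p) (by positivity),
      Real.mul_rpow hd.le (by positivity), ← Real.rpow_mul hc.le, mul_one_div,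
      div_self hp0.ne', Real.rpow_one]
  have hIq_eval : Iq ^ (1/q) ≤ d ^ (1/q) * ((A + B) / 2) ^ (1/q) := by
    rw [← Real.mul_rpow hd.le (by positivity)]
    exact Real.rpow_le_rpow hIq0 hIq_le (by positivity)
  have hdd : d ^ (1/p) * d ^ (1/q) = d := by
    rw [← Real.rpow_add hd, hpq, Real.rpow_one]
  -- final assembly
  calc |(G m1 + G m2) / 2 - 1 / d * ∫ x in m1..m2, G x|
      = (1/d) * |∫ x in m1..m2, (x - mid) * deriv G x| := by
        rw [key, abs_mul, abs_of_nonneg (by positivity : (0:ℝ) ≤ 1/d)]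
    _ ≤ (1/d) * (Ip ^ (1/p) * Iq ^ (1/q)) :=
        mul_le_mul_of_nonneg_left hchain (by positivity)
    _ ≤ (1/d) * ((c * (d ^ (1/p) * (1/(p+1)) ^ (1/p)))
          * (d ^ (1/q) * ((A + B) / 2) ^ (1/q))) := by
        rw [hIp_eval]
        refine mul_le_mul_of_nonneg_left (mul_le_mul_of_nonneg_left hIq_eval ?_) (by positivity)
        positivity
    _ = (d ^ (1/p) * d ^ (1/q)) * ((1/d) * c * (1/(p+1)) ^ (1/p) * ((A + B) / 2) ^ (1/q)) := by
        ring
    _ = d / 2 * (1/(p+1)) ^ (1/p) * ((A + B) / 2) ^ (1/q) := by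
        rw [hdd, hcdef]
        field_simp
end

section
/- Let G : V ⊆ ℝ → ℝ be differentiable with |G'|^q convex on [m1, m2] for some q ≥ 1. Then |(G(m1)+G(m2))/2 - (1/(m2-m1)) ∫_{m1}^{m2} G(x) dx| ≤ ((m2-m1)/4)·[(|G'(m1)|^q + |G'(m2)|^q)/2]^{1/q}. -/
open MeasureTheory intervalIntegral

lemma two_point_power_mean (q u v : ℝ) (hq : 1 ≤ q) (hu : 0 ≤ u) (hv : 0 ≤ v) :
    u ^ (1 / q) + v ^ (1 / q) ≤ 2 * ((u + v) / 2) ^ (1 / q) := by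
  have hq0 : (0 : ℝ) < q := lt_of_lt_of_le one_pos hq
  have h := Real.arith_mean_le_rpow_mean (Finset.univ : Finset (Fin 2))
      ![1/2, 1/2] ![u ^ (1/q), v ^ (1/q)]
      (by intro i _; fin_cases i <;> norm_num)
      (by simp [Fin.sum_univ_two]; norm_num)
      (by intro i _; fin_cases i <;> simp <;> positivity) hq
  simp only [Fin.sum_univ_two, Matrix.cons_val_zero, Matrix.cons_val_one, Matrix.head_cons] at h
  rw [show (u ^ (1/q)) ^ q = u by rw [one_div, Real.rpow_inv_rpow hu hq0.ne'],
      show (v ^ (1/q)) ^ q = v by rw [one_div, Real.rpow_inv_rpow hv hq0.ne']] at h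
  have : (1:ℝ)/2 * u + 1/2 * v = (u + v) / 2 := by ring
  rw [this] at h
  linarith

theorem trapezoid_pearce_pecaric (m1 m2 : ℝ) (G : ℝ → ℝ) (hlt : m1 < m2)
    (V : Set ℝ) (hV : IsOpen V) (hVI : Set.Icc m1 m2 ⊆ V)
    (hdiff : ∀ x ∈ V, DifferentiableAt ℝ G x)
    (hG' : IntervalIntegrable (deriv G) volume m1 m2)
    (q : ℝ) (hq : 1 ≤ q)
    (hconv : ConvexOn ℝ (Set.Icc m1 m2) (fun x => |deriv G x| ^ q)) :
    |(G m1 + G m2) / 2 - (1 / (m2 - m1)) * ∫ x in m1..m2, G x| ≤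
      ((m2 - m1) / 4) * ((|deriv G m1| ^ q + |deriv G m2| ^ q) / 2) ^ (1 / q) := by
  have hle : m1 ≤ m2 := hlt.le
  have hD : (0:ℝ) < m2 - m1 := by linarith
  have hq0 : (0:ℝ) < q := lt_of_lt_of_le one_pos hq
  set c : ℝ := (m1 + m2) / 2 with hc
  set A : ℝ := |deriv G m1| ^ q with hA
  set B : ℝ := |deriv G m2| ^ q with hB
  have hA0 : 0 ≤ A := Real.rpow_nonneg (abs_nonneg _) q
  have hB0 : 0 ≤ B := Real.rpow_nonneg (abs_nonneg _) q
  set r : ℝ := ((A + B) / 2) ^ (1 / q) with hr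
  have hr0 : 0 ≤ r := Real.rpow_nonneg (by positivity) _
  set φ : ℝ → ℝ := fun x => ((m2 - x) / (m2 - m1)) * A + ((x - m1) / (m2 - m1)) * B with hφ
  -- continuity of G on [m1,m2]
  have hGc : ContinuousOn G (Set.uIcc m1 m2) := by
    rw [Set.uIcc_of_le hle]
    exact fun x hx => (hdiff x (hVI hx)).continuousAt.continuousWithinAt
  have hGint : IntervalIntegrable G volume m1 m2 := hGc.intervalIntegrable
  -- integration by parts
  have hparts : ∫ x in m1..m2, (x - c) * deriv G x
      = (m2 - c) * G m2 - (m1 - c) * G m1 - ∫ x in m1..m2, 1 * G x := by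
    apply intervalIntegral.integral_mul_deriv_eq_deriv_mul_of_hasDerivAt
    · exact (continuous_id.sub continuous_const).continuousOn
    · exact hGc
    · intro x _; exact (hasDerivAt_id x).sub_const c
    · intro x hx
      rw [min_eq_left hle, max_eq_right hle] at hx
      exact (hdiff x (hVI (Set.mem_Icc.2 ⟨hx.1.le, hx.2.le⟩))).hasDerivAt
    · exact intervalIntegrable_const
    · exact hG'
  simp only [one_mul] at hparts
  -- key identity
  have hid : (G m1 + G m2) / 2 - (1 / (m2 - m1)) * ∫ x in m1..m2, G x
      = (1 / (m2 - m1)) * ∫ x in m1..m2, (x - c) * deriv G x := by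
    rw [hparts]; field_simp; ring
  -- pointwise convexity bound
  have hpt : ∀ x ∈ Set.Icc m1 m2, |deriv G x| ≤ (φ x) ^ (1 / q) := by
    intro x hx
    obtain ⟨hx1, hx2⟩ := hx
    have ht0 : 0 ≤ (m2 - x) / (m2 - m1) := div_nonneg (by linarith) hD.le
    have ht0' : 0 ≤ (x - m1) / (m2 - m1) := div_nonneg (by linarith) hD.le
    have htsum : (m2 - x) / (m2 - m1) + (x - m1) / (m2 - m1) = 1 := by
      field_simp; ring
    have hcomb : ((m2 - x) / (m2 - m1)) • m1 + ((x - m1) / (m2 - m1)) • m2 = x := by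
      simp only [smul_eq_mul]; field_simp; ring
    have h1 := hconv.2 (Set.left_mem_Icc.2 hle) (Set.right_mem_Icc.2 hle) ht0 ht0' htsum
    rw [hcomb] at h1
    simp only [smul_eq_mul] at h1
    have h2 : |deriv G x| ^ q ≤ φ x := h1
    calc |deriv G x| = (|deriv G x| ^ q) ^ (1 / q) := by
          rw [one_div, Real.rpow_rpow_inv (abs_nonneg _) hq0.ne']
      _ ≤ (φ x) ^ (1 / q) := Real.rpow_le_rpow (Real.rpow_nonneg (abs_nonneg _) _) h2 (by positivity)
  -- nonnegativity of φ on Icc and of A+B-φ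
  have hφ0 : ∀ x ∈ Set.Icc m1 m2, 0 ≤ φ x := by
    intro x hx
    have h1 : 0 ≤ (m2 - x) / (m2 - m1) * A := mul_nonneg (div_nonneg (by linarith [hx.2]) hD.le) hA0
    have h2 : 0 ≤ (x - m1) / (m2 - m1) * B := mul_nonneg (div_nonneg (by linarith [hx.1]) hD.le) hB0
    simp only [hφ]; linarith
  have hφ1 : ∀ x ∈ Set.Icc m1 m2, 0 ≤ A + B - φ x := by
    intro x hx
    have hx1 := hx.1; have hx2 := hx.2
    have key : A + B - φ x = ((x - m1) / (m2 - m1)) * A + ((m2 - x) / (m2 - m1)) * B := by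
      simp only [hφ]; field_simp; ring
    rw [key]
    have h1 : 0 ≤ (x - m1) / (m2 - m1) * A := mul_nonneg (div_nonneg (by linarith) hD.le) hA0
    have h2 : 0 ≤ (m2 - x) / (m2 - m1) * B := mul_nonneg (div_nonneg (by linarith) hD.le) hB0
    linarith
  -- functions
  set g : ℝ → ℝ := fun x => |x - c| * (φ x) ^ (1 / q) with hg
  set g2 : ℝ → ℝ := fun x => |x - c| * (A + B - φ x) ^ (1 / q) with hg2
  have hφcont : Continuous φ := by fun_prop
  have hgcont : ContinuousOn g (Set.uIcc m1 m2) := by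
    apply ContinuousOn.mul ((continuous_id.sub continuous_const).abs.continuousOn)
    exact hφcont.continuousOn.rpow_const (fun x _ => Or.inr (one_div_pos.mpr hq0).le)
  have hg2cont : ContinuousOn g2 (Set.uIcc m1 m2) := by
    apply ContinuousOn.mul ((continuous_id.sub continuous_const).abs.continuousOn)
    exact ((continuous_const.sub hφcont).continuousOn).rpow_const (fun x _ => Or.inr (one_div_pos.mpr hq0).le)
  have hgint : IntervalIntegrable g volume m1 m2 := hgcont.intervalIntegrable
  have hg2int : IntervalIntegrable g2 volume m1 m2 := hg2cont.intervalIntegrable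
  have habsint : IntervalIntegrable (fun x => |x - c| * |deriv G x|) volume m1 m2 :=
    hG'.abs.continuousOn_mul ((continuous_id.sub continuous_const).abs.continuousOn)
  -- mirror identity
  have hmirror : (∫ x in m1..m2, g2 x) = ∫ x in m1..m2, g x := by
    have hpteq : ∀ x, g2 x = g (m1 + m2 - x) := by
      intro x
      simp only [hg, hg2, hφ]
      have h1 : |m1 + m2 - x - c| = |x - c| := by
        rw [hc, abs_sub_comm]; congr 1; ring
      rw [h1]
      congr 2
      field_simp
      ring
    calc (∫ x in m1..m2, g2 x) = ∫ x in m1..m2, g (m1 + m2 - x) := by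
          simp only [hpteq]
      _ = ∫ x in (m1+m2) - m2..(m1+m2) - m1, g x := intervalIntegral.integral_comp_sub_left g (m1+m2)
      _ = ∫ x in m1..m2, g x := by norm_num
  -- ∫ |x - c| = (m2-m1)^2/4
  have hwint : ∀ u v : ℝ, IntervalIntegrable (fun x => |x - c|) volume u v :=
    fun u v => ((continuous_id.sub continuous_const).abs.continuousOn).intervalIntegrable
  have hw : (∫ x in m1..m2, |x - c|) = (m2 - m1)^2 / 4 := by
    have hsplit := intervalIntegral.integral_add_adjacent_intervals (hwint m1 c) (hwint c m2)
    have h1 : (∫ x in m1..c, |x - c|) = ∫ x in m1..c, (c - x) := by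
      apply intervalIntegral.integral_congr
      intro x hx
      rw [Set.uIcc_of_le (by rw [hc]; linarith)] at hx
      show |x - c| = c - x
      rw [abs_of_nonpos (by linarith [hx.2])]; ring
    have h2 : (∫ x in c..m2, |x - c|) = ∫ x in c..m2, (x - c) := by
      apply intervalIntegral.integral_congr
      intro x hx
      rw [Set.uIcc_of_le (by rw [hc]; linarith)] at hx
      show |x - c| = x - c
      rw [abs_of_nonneg (by linarith [hx.1])]
    rw [h1, h2] at hsplit
    rw [← hsplit]
    rw [intervalIntegral.integral_sub intervalIntegrable_const intervalIntegrable_id,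
        intervalIntegral.integral_sub intervalIntegrable_id intervalIntegrable_const]
    simp [integral_id, hc]
    ring
  -- main integral bound
  have hSbound : (∫ x in m1..m2, g x) ≤ (m2 - m1)^2 / 4 * r := by
    have hsum : (∫ x in m1..m2, (g x + g2 x)) ≤ ∫ x in m1..m2, (2 * r) * |x - c| := by
      apply intervalIntegral.integral_mono_on hle (hgint.add hg2int)
        ((hwint m1 m2).const_mul (2*r))
      intro x hx
      have htp := two_point_power_mean q (φ x) (A + B - φ x) hq (hφ0 x hx) (hφ1 x hx)
      have hAB : φ x + (A + B - φ x) = A + B := by ring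
      rw [hAB] at htp
      have : g x + g2 x = |x - c| * ((φ x) ^ (1/q) + (A + B - φ x) ^ (1/q)) := by
        simp only [hg, hg2]; ring
      rw [this]
      calc |x - c| * ((φ x) ^ (1/q) + (A + B - φ x) ^ (1/q))
          ≤ |x - c| * (2 * r) := by
            apply mul_le_mul_of_nonneg_left _ (abs_nonneg _)
            exact htp
        _ = (2 * r) * |x - c| := by ring
    rw [intervalIntegral.integral_add hgint hg2int, hmirror,
        intervalIntegral.integral_const_mul, hw] at hsum
    linarith
  -- chain
  rw [hid, abs_mul, abs_of_nonneg (by positivity : (0:ℝ) ≤ 1 / (m2 - m1))]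
  have hchain : |∫ x in m1..m2, (x - c) * deriv G x| ≤ (m2 - m1)^2 / 4 * r := by
    calc |∫ x in m1..m2, (x - c) * deriv G x|
        ≤ ∫ x in m1..m2, |(x - c) * deriv G x| :=
          intervalIntegral.abs_integral_le_integral_abs hle
      _ = ∫ x in m1..m2, |x - c| * |deriv G x| := by
          congr 1; funext x; rw [abs_mul]
      _ ≤ ∫ x in m1..m2, g x := by
          apply intervalIntegral.integral_mono_on hle habsint hgint
          intro x hx
          exact mul_le_mul_of_nonneg_left (hpt x hx) (abs_nonneg _)
      _ ≤ (m2 - m1)^2 / 4 * r := hSbound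
  calc (1 / (m2 - m1)) * |∫ x in m1..m2, (x - c) * deriv G x|
      ≤ (1 / (m2 - m1)) * ((m2 - m1)^2 / 4 * r) := by
        apply mul_le_mul_of_nonneg_left hchain (by positivity)
    _ = ((m2 - m1) / 4) * r := by field_simp
end

section
/- Let G : V ⊆ ℝ → ℝ be differentiable on the interior of V, m1 < m2, G' integrable. Then (1/(m2-m1)) ∫_{m1}^{m2} G(x) dx - G((m1+m2)/2) = (m2-m1) ∫_0^1 Q(ζ) G'(ζm1 + (1-ζ)m2) dζ, where Q(ζ) = ζ for ζ ∈ [0, 1/2) and Q(ζ) = ζ - 1 for ζ ∈ [1/2, 1]. -/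
open MeasureTheory intervalIntegral

theorem kirmaci_identity (m1 m2 : ℝ) (G : ℝ → ℝ) (hlt : m1 < m2)
    (V : Set ℝ) (hV : IsOpen V) (hVI : Set.Icc m1 m2 ⊆ V)
    (hdiff : ∀ x ∈ V, DifferentiableAt ℝ G x)
    (hG : IntervalIntegrable G volume m1 m2)
    (hG' : IntervalIntegrable (deriv G) volume m1 m2)
    (Q : ℝ → ℝ) (hQ : ∀ ζ : ℝ, Q ζ = if ζ < 1 / 2 then ζ else ζ - 1) :
    (1 / (m2 - m1)) * (∫ x in m1..m2, G x) - G ((m1 + m2) / 2) =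
      (m2 - m1) * ∫ ζ in (0:ℝ)..1, Q ζ * deriv G (ζ * m1 + (1 - ζ) * m2) := by
  set c : ℝ := m1 - m2 with hc
  have hcne : c ≠ 0 := by rw [hc]; intro h; linarith [sub_eq_zero.mp h]
  set f : ℝ → ℝ := fun ζ => deriv G (c * ζ + m2) with hf
  -- rewrite the integrand's argument
  have harg : ∀ ζ : ℝ, ζ * m1 + (1 - ζ) * m2 = c * ζ + m2 := fun ζ => by
    rw [hc]; ring
  have hintegrand :
      (∫ ζ in (0:ℝ)..1, Q ζ * deriv G (ζ * m1 + (1 - ζ) * m2))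
        = ∫ ζ in (0:ℝ)..1, Q ζ * f ζ := by
    refine integral_congr fun ζ _ => ?_
    rw [harg]
  -- membership
  have hmem : ∀ ζ ∈ Set.Icc (0:ℝ) 1, c * ζ + m2 ∈ V := by
    intro ζ hζ
    apply hVI
    constructor
    · rw [hc]; nlinarith [hζ.1, hζ.2]
    · rw [hc]; nlinarith [hζ.1, hζ.2]
  -- integrability of f on [0,1]
  have hfint : IntervalIntegrable f volume 0 1 := by
    have h1 := (hG'.comp_add_right m2).comp_mul_left (c := c)
    have e1 : (m1 - m2) / c = 1 := by rw [hc]; field_simp [sub_ne_zero.mpr hlt.ne]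
    have e2 : (m2 - m2) / c = 0 := by simp
    rw [e1, e2] at h1
    exact h1.symm
  -- continuity of u := G ∘ affine on [0,1]
  -- derivative of u
  have hu : ∀ ζ ∈ Set.Icc (0:ℝ) 1,
      HasDerivAt (fun t => G (c * t + m2)) (f ζ * c) ζ := by
    intro ζ hζ
    have h1 : HasDerivAt (fun t : ℝ => c * t + m2) c ζ := by
      simpa using ((hasDerivAt_id ζ).const_mul c).add_const m2
    exact ((hdiff _ (hmem ζ hζ)).hasDerivAt).comp ζ h1
  have hIcc : Set.Icc (0:ℝ) 1 = Set.uIcc 0 1 := (Set.uIcc_of_le (by norm_num)).symm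
  have hucont : ContinuousOn (fun ζ => G (c * ζ + m2)) (Set.Icc (0:ℝ) 1) :=
    fun ζ hζ => (hu ζ hζ).continuousAt.continuousWithinAt
  have huint : ∀ a b : ℝ, Set.uIcc a b ⊆ Set.Icc (0:ℝ) 1 →
      IntervalIntegrable (fun ζ => G (c * ζ + m2)) volume a b := fun a b hsub =>
    (hucont.mono hsub).intervalIntegrable
  -- generic integration by parts
  have key : ∀ a b d : ℝ, Set.uIcc a b ⊆ Set.Icc (0:ℝ) 1 →
      (∫ ζ in a..b, (ζ - d) * f ζ) * c
        = (b - d) * G (c * b + m2) - (a - d) * G (c * a + m2)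
            - ∫ ζ in a..b, G (c * ζ + m2) := by
    intro a b d hsub
    have hibp := intervalIntegral.integral_mul_deriv_eq_deriv_mul
      (u := fun ζ : ℝ => ζ - d) (u' := fun _ => (1:ℝ))
      (v := fun t => G (c * t + m2)) (v' := fun ζ => f ζ * c)
      (fun ζ _ => (hasDerivAt_id ζ).sub_const d)
      (fun ζ hζ => hu ζ (hsub hζ))
      intervalIntegrable_const
      ((hfint.mono_set (hIcc ▸ hsub)).mul_const c)
    have e : (∫ ζ in a..b, (ζ - d) * (f ζ * c))
        = (∫ ζ in a..b, (ζ - d) * f ζ) * c := by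
      rw [← intervalIntegral.integral_mul_const]
      exact integral_congr fun ζ _ => by ring
    rw [e] at hibp
    rw [hibp]
    congr 1
    exact integral_congr fun ζ _ => by ring
  have hsub1 : Set.uIcc (0:ℝ) (1/2) ⊆ Set.Icc (0:ℝ) 1 := by
    rw [Set.uIcc_of_le (by norm_num)]
    exact Set.Icc_subset_Icc le_rfl (by norm_num)
  have hsub2 : Set.uIcc (1/2:ℝ) 1 ⊆ Set.Icc (0:ℝ) 1 := by
    rw [Set.uIcc_of_le (by norm_num)]
    exact Set.Icc_subset_Icc (by norm_num) le_rfl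
  -- Q equals the pieces
  have h12 : ∀ᵐ ζ : ℝ, ζ ≠ (1/2:ℝ) := by
    rw [ae_iff]
    simp only [ne_eq, not_not, Set.setOf_eq_eq_singleton]
    exact measure_singleton _
  have hQ1 : ∀ᵐ ζ : ℝ ∂(volume.restrict (Set.uIoc (0:ℝ) (1/2))),
      Q ζ * f ζ = ζ * f ζ := by
    filter_upwards [ae_restrict_of_ae h12, ae_restrict_mem measurableSet_uIoc]
      with ζ hne hζ
    rw [Set.uIoc_of_le (by norm_num : (0:ℝ) ≤ 1/2)] at hζ
    rw [hQ, if_pos (lt_of_le_of_ne hζ.2 hne)]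
  have hQ2 : ∀ ζ ∈ Set.uIcc (1/2:ℝ) 1, Q ζ * f ζ = (ζ - 1) * f ζ := by
    intro ζ hζ
    rw [Set.uIcc_of_le (by norm_num : (1/2:ℝ) ≤ 1)] at hζ
    rw [hQ, if_neg (not_lt.mpr hζ.1)]
  -- integrability of the two pieces
  have base1 : IntervalIntegrable (fun ζ => ζ * f ζ) volume 0 (1/2) :=
    (hfint.mono_set (hIcc ▸ hsub1)).continuousOn_mul continuousOn_id
  have base2 : IntervalIntegrable (fun ζ => (ζ - 1) * f ζ) volume (1/2) 1 :=
    (hfint.mono_set (hIcc ▸ hsub2)).continuousOn_mul (by fun_prop)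
  have hint1 : IntervalIntegrable (fun ζ => Q ζ * f ζ) volume 0 (1/2) :=
    base1.congr_ae (by filter_upwards [hQ1] with ζ h; rw [h])
  have hint2 : IntervalIntegrable (fun ζ => Q ζ * f ζ) volume (1/2) 1 :=
    base2.congr_ae (by
      filter_upwards [ae_restrict_mem measurableSet_uIoc] with ζ hζ
      exact (hQ2 ζ (Set.uIoc_subset_uIcc hζ)).symm)
  -- split the integral
  have hsplit : (∫ ζ in (0:ℝ)..1, Q ζ * f ζ)
      = (∫ ζ in (0:ℝ)..(1/2), Q ζ * f ζ) + ∫ ζ in (1/2:ℝ)..1, Q ζ * f ζ :=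
    (integral_add_adjacent_intervals hint1 hint2).symm
  have hval1 : (∫ ζ in (0:ℝ)..(1/2), Q ζ * f ζ) = ∫ ζ in (0:ℝ)..(1/2), ζ * f ζ :=
    integral_congr_ae (by
      filter_upwards [h12] with ζ hne hζ
      rw [Set.uIoc_of_le (by norm_num : (0:ℝ) ≤ 1/2)] at hζ
      rw [hQ, if_pos (lt_of_le_of_ne hζ.2 hne)])
  have hval2 : (∫ ζ in (1/2:ℝ)..1, Q ζ * f ζ) = ∫ ζ in (1/2:ℝ)..1, (ζ - 1) * f ζ :=
    integral_congr hQ2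
  -- apply IBP to the pieces
  have hA := key 0 (1/2) 0 hsub1
  have hB := key (1/2) 1 1 hsub2
  simp only [sub_zero] at hA
  -- midpoint value
  have hmid : c * (1/2) + m2 = (m1 + m2) / 2 := by rw [hc]; ring
  rw [hmid] at hA hB
  -- substitution for ∫ u
  have hT : (∫ ζ in (0:ℝ)..1, G (c * ζ + m2))
      = (1 / (m2 - m1)) * ∫ x in m1..m2, G x := by
    have := integral_comp_mul_add (a := (0:ℝ)) (b := 1) G hcne m2
    rw [this]
    have e1 : c * 0 + m2 = m2 := by ring
    have e2 : c * 1 + m2 = m1 := by rw [hc]; ring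
    rw [e1, e2, integral_symm m1 m2, smul_eq_mul, hc,
      show m1 - m2 = -(m2 - m1) by ring, inv_neg, one_div]
    ring
  -- glue the u-integrals
  have hTglue : (∫ ζ in (0:ℝ)..(1/2), G (c * ζ + m2))
        + (∫ ζ in (1/2:ℝ)..1, G (c * ζ + m2))
      = ∫ ζ in (0:ℝ)..1, G (c * ζ + m2) :=
    integral_add_adjacent_intervals (huint _ _ hsub1) (huint _ _ hsub2)
  -- final arithmetic
  rw [hintegrand, hsplit, hval1, hval2]
  have hsum : ((∫ ζ in (0:ℝ)..(1/2), ζ * f ζ) + ∫ ζ in (1/2:ℝ)..1, (ζ - 1) * f ζ) * c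
      = G ((m1 + m2) / 2) - (1 / (m2 - m1)) * ∫ x in m1..m2, G x := by
    rw [add_mul, hA, hB, ← hT, ← hTglue]
    ring
  have hneg : (m2 - m1) * ((∫ ζ in (0:ℝ)..(1/2), ζ * f ζ)
        + ∫ ζ in (1/2:ℝ)..1, (ζ - 1) * f ζ)
      = -(((∫ ζ in (0:ℝ)..(1/2), ζ * f ζ) + ∫ ζ in (1/2:ℝ)..1, (ζ - 1) * f ζ) * c) := by
    rw [hc]; ring
  rw [hneg, hsum]
  ring
end

section
/- Let G : V ⊆ ℝ → ℝ be differentiable with |G'| convex on [m1, m2], m1 < m2. Then |(1/(m2-m1)) ∫_{m1}^{m2} G(x) dx - G((m1+m2)/2)| ≤ ((m2-m1)/8)·(|G'(m1)| + |G'(m2)|). -/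
open MeasureTheory intervalIntegral

theorem kirmaci_midpoint (m1 m2 : ℝ) (G : ℝ → ℝ) (hlt : m1 < m2)
    (V : Set ℝ) (hV : IsOpen V) (hVI : Set.Icc m1 m2 ⊆ V)
    (hdiff : ∀ x ∈ V, DifferentiableAt ℝ G x)
    (hG' : IntervalIntegrable (deriv G) volume m1 m2)
    (hconv : ConvexOn ℝ (Set.Icc m1 m2) (fun x => |deriv G x|)) :
    |(1 / (m2 - m1)) * (∫ x in m1..m2, G x) - G ((m1 + m2) / 2)| ≤
      ((m2 - m1) / 8) * (|deriv G m1| + |deriv G m2|) := by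
  set mid := (m1 + m2) / 2 with hmid
  have hle : m1 ≤ m2 := hlt.le
  have h1m : m1 ≤ mid := by rw [hmid]; linarith
  have hm2 : mid ≤ m2 := by rw [hmid]; linarith
  have hpos : (0:ℝ) < m2 - m1 := by linarith
  have hne : m2 - m1 ≠ 0 := ne_of_gt hpos
  set A := |deriv G m1| with hA
  set B := |deriv G m2| with hB
  have huIcc : Set.uIcc m1 m2 = Set.Icc m1 m2 := Set.uIcc_of_le hle
  have hsub1 : Set.uIcc m1 mid ⊆ Set.Icc m1 m2 := by
    rw [Set.uIcc_of_le h1m]; exact Set.Icc_subset_Icc le_rfl hm2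
  have hsub2 : Set.uIcc mid m2 ⊆ Set.Icc m1 m2 := by
    rw [Set.uIcc_of_le hm2]; exact Set.Icc_subset_Icc h1m le_rfl
  have hGc : ContinuousOn G (Set.Icc m1 m2) := fun x hx =>
    ((hdiff x (hVI hx)).continuousAt).continuousWithinAt
  have hDG : ∀ x ∈ Set.Icc m1 m2, HasDerivAt G (deriv G x) x := fun x hx =>
    (hdiff x (hVI hx)).hasDerivAt
  have hG'1 : IntervalIntegrable (deriv G) volume m1 mid :=
    hG'.mono_set (by rw [huIcc]; exact hsub1)
  have hG'2 : IntervalIntegrable (deriv G) volume mid m2 :=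
    hG'.mono_set (by rw [huIcc]; exact hsub2)
  have hGint1 : IntervalIntegrable G volume m1 mid :=
    (hGc.mono hsub1).intervalIntegrable
  have hGint2 : IntervalIntegrable G volume mid m2 :=
    (hGc.mono hsub2).intervalIntegrable
  -- integration by parts on [m1, mid]
  have ibp1 : (∫ x in m1..mid, (x - m1) * deriv G x)
      = (mid - m1) * G mid - ∫ x in m1..mid, G x := by
    have h0 := intervalIntegral.integral_mul_deriv_eq_deriv_mul
      (u := fun x => x - m1) (v := G) (u' := fun _ => (1:ℝ)) (v' := deriv G)
      (fun x _ => (hasDerivAt_id x).sub_const m1)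
      (fun x hx => hDG x (hsub1 hx))
      intervalIntegrable_const hG'1
    simp only [sub_self, zero_mul, sub_zero, one_mul] at h0
    linarith [h0]
  -- integration by parts on [mid, m2]
  have ibp2 : (∫ x in mid..m2, (x - m2) * deriv G x)
      = (m2 - mid) * G mid - ∫ x in mid..m2, G x := by
    have h0 := intervalIntegral.integral_mul_deriv_eq_deriv_mul
      (u := fun x => x - m2) (v := G) (u' := fun _ => (1:ℝ)) (v' := deriv G)
      (fun x _ => (hasDerivAt_id x).sub_const m2)
      (fun x hx => hDG x (hsub2 hx))
      intervalIntegrable_const hG'2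
    simp only [sub_self, zero_mul, zero_sub, one_mul] at h0
    linarith [h0]
  have key : (m2 - m1) * G mid - ∫ x in m1..m2, G x
      = (∫ x in m1..mid, (x - m1) * deriv G x)
        + ∫ x in mid..m2, (x - m2) * deriv G x := by
    have hadd : (∫ x in m1..mid, G x) + ∫ x in mid..m2, G x = ∫ x in m1..m2, G x :=
      integral_add_adjacent_intervals hGint1 hGint2
    rw [ibp1, ibp2]; linarith [hadd]
  -- convexity bound
  have hcb : ∀ x ∈ Set.Icc m1 m2,
      |deriv G x| ≤ ((m2 - x) * A + (x - m1) * B) / (m2 - m1) := by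
    intro x hx
    have h1 : (0:ℝ) ≤ (m2 - x) / (m2 - m1) := by
      apply div_nonneg <;> linarith [hx.2]
    have h2 : (0:ℝ) ≤ (x - m1) / (m2 - m1) := by
      apply div_nonneg <;> linarith [hx.1]
    have h3 : (m2 - x)/(m2-m1) + (x - m1)/(m2-m1) = 1 := by field_simp; ring
    have h4 : ((m2 - x)/(m2-m1)) • m1 + ((x - m1)/(m2-m1)) • m2 = x := by
      simp only [smul_eq_mul]; field_simp; ring
    have h5 := hconv.2 (Set.left_mem_Icc.2 hle) (Set.right_mem_Icc.2 hle) h1 h2 h3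
    rw [h4] at h5
    calc |deriv G x| ≤ ((m2 - x)/(m2-m1)) • |deriv G m1|
          + ((x - m1)/(m2-m1)) • |deriv G m2| := h5
      _ = ((m2 - x) * A + (x - m1) * B) / (m2 - m1) := by
          simp only [smul_eq_mul, ← hA, ← hB]; ring
  -- bound the first integral
  have habs1 : |∫ x in m1..mid, (x - m1) * deriv G x|
      ≤ ∫ x in m1..mid, (x - m1) * (((m2 - x) * A + (x - m1) * B) / (m2 - m1)) := by
    have hi1 : IntervalIntegrable (fun x => |(x - m1) * deriv G x|) volume m1 mid :=
      (hG'1.continuousOn_mul (by fun_prop)).abs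
    have hi2 : IntervalIntegrable
        (fun x => (x - m1) * (((m2 - x) * A + (x - m1) * B) / (m2 - m1))) volume m1 mid :=
      (Continuous.intervalIntegrable (by fun_prop) _ _)
    refine le_trans (intervalIntegral.abs_integral_le_integral_abs h1m) ?_
    refine intervalIntegral.integral_mono_on h1m hi1 hi2 ?_
    intro x hx
    rw [abs_mul, abs_of_nonneg (by linarith [hx.1] : (0:ℝ) ≤ x - m1)]
    exact mul_le_mul_of_nonneg_left (hcb x ⟨hx.1, le_trans hx.2 hm2⟩) (by linarith [hx.1])
  -- bound the second integral
  have habs2 : |∫ x in mid..m2, (x - m2) * deriv G x|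
      ≤ ∫ x in mid..m2, (m2 - x) * (((m2 - x) * A + (x - m1) * B) / (m2 - m1)) := by
    have hi1 : IntervalIntegrable (fun x => |(x - m2) * deriv G x|) volume mid m2 :=
      (hG'2.continuousOn_mul (by fun_prop)).abs
    have hi2 : IntervalIntegrable
        (fun x => (m2 - x) * (((m2 - x) * A + (x - m1) * B) / (m2 - m1))) volume mid m2 :=
      (Continuous.intervalIntegrable (by fun_prop) _ _)
    refine le_trans (intervalIntegral.abs_integral_le_integral_abs hm2) ?_
    refine intervalIntegral.integral_mono_on hm2 hi1 hi2 ?_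
    intro x hx
    rw [abs_mul, abs_of_nonpos (by linarith [hx.2] : x - m2 ≤ 0)]
    have : -(x - m2) = m2 - x := by ring
    rw [this]
    exact mul_le_mul_of_nonneg_left (hcb x ⟨le_trans h1m hx.1, hx.2⟩) (by linarith [hx.2])
  -- compute the polynomial integrals
  have J1 : (∫ x in m1..mid, (x - m1) * (((m2 - x) * A + (x - m1) * B) / (m2 - m1)))
      = A * (m2 - m1)^2 / 12 + B * (m2 - m1)^2 / 24 := by
    have hF : ∀ x ∈ Set.uIcc m1 mid, HasDerivAt
        (fun x => (A * ((m2 - m1) * (x - m1)^2 / 2 - (x - m1)^3 / 3)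
          + B * (x - m1)^3 / 3) / (m2 - m1))
        ((x - m1) * (((m2 - x) * A + (x - m1) * B) / (m2 - m1))) x := by
      intro x _
      have h1 : HasDerivAt (fun x : ℝ => x - m1) 1 x := (hasDerivAt_id x).sub_const m1
      have h2 := h1.pow 2
      have h3 := h1.pow 3
      have hbig := ((((h2.const_mul (m2 - m1)).div_const 2).sub (h3.div_const 3)).const_mul A
        |>.add ((h3.const_mul B).div_const 3)) |>.div_const (m2 - m1)
      convert hbig using 1
      · rfl
      · rfl
      · rfl
      ring
    rw [intervalIntegral.integral_eq_sub_of_hasDerivAt hF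
      (Continuous.intervalIntegrable (by fun_prop) _ _)]
    rw [hmid]
    field_simp
    ring
  have J2 : (∫ x in mid..m2, (m2 - x) * (((m2 - x) * A + (x - m1) * B) / (m2 - m1)))
      = A * (m2 - m1)^2 / 24 + B * (m2 - m1)^2 / 12 := by
    have hF : ∀ x ∈ Set.uIcc mid m2, HasDerivAt
        (fun x => (A * (-(m2 - x)^3 / 3)
          + B * (-((m2 - m1) * (m2 - x)^2) / 2 + (m2 - x)^3 / 3)) / (m2 - m1))
        ((m2 - x) * (((m2 - x) * A + (x - m1) * B) / (m2 - m1))) x := by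
      intro x _
      have h1 : HasDerivAt (fun x : ℝ => m2 - x) (-1) x := by
        simpa using (hasDerivAt_id x).const_sub m2
      have h2 := h1.pow 2
      have h3 := h1.pow 3
      have hbig := (((h3.neg.div_const 3).const_mul A).add
        ((((h2.const_mul (m2 - m1)).neg.div_const 2).add (h3.div_const 3)).const_mul B))
        |>.div_const (m2 - m1)
      convert hbig using 1
      · rfl
      · rfl
      · rfl
      ring
    rw [intervalIntegral.integral_eq_sub_of_hasDerivAt hF
      (Continuous.intervalIntegrable (by fun_prop) _ _)]
    rw [hmid]
    field_simp
    ring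
  -- assemble
  have hsum : |(m2 - m1) * G mid - ∫ x in m1..m2, G x|
      ≤ (A + B) * (m2 - m1)^2 / 8 := by
    rw [key]
    calc |(∫ x in m1..mid, (x - m1) * deriv G x)
          + ∫ x in mid..m2, (x - m2) * deriv G x|
        ≤ |∫ x in m1..mid, (x - m1) * deriv G x|
          + |∫ x in mid..m2, (x - m2) * deriv G x| := abs_add_le _ _
      _ ≤ (A * (m2 - m1)^2 / 12 + B * (m2 - m1)^2 / 24)
          + (A * (m2 - m1)^2 / 24 + B * (m2 - m1)^2 / 12) :=
        add_le_add (habs1.trans_eq J1) (habs2.trans_eq J2)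
      _ = (A + B) * (m2 - m1)^2 / 8 := by ring
  have e1 : (1 / (m2 - m1)) * (∫ x in m1..m2, G x) - G mid
      = -(((m2 - m1) * G mid - ∫ x in m1..m2, G x) / (m2 - m1)) := by
    field_simp
    ring
  rw [e1, abs_neg, abs_div, abs_of_pos hpos]
  calc |(m2 - m1) * G mid - ∫ x in m1..m2, G x| / (m2 - m1)
      ≤ ((A + B) * (m2 - m1)^2 / 8) / (m2 - m1) := by gcongr
    _ = ((m2 - m1) / 8) * (A + B) := by field_simp
end

section
/- Let G : [m1, m2] → ℝ be nonnegative, convex, and integrable with 0 ≤ m1 < m2, and let λ > 0. Then G((m1+m2)/2) ≤ (Γ(λ+1)/(2(m2-m1)^λ))·[J_{m1+}^λ G(m2) + J_{m2-}^λ G(m1)] ≤ (G(m1)+G(m2))/2, where J_{m1+}^λ G(x) = (1/Γ(λ)) ∫_{m1}^x (x-γ)^{λ-1} G(γ) dγ and J_{m2-}^λ G(x) = (1/Γ(λ)) ∫_x^{m2} (γ-x)^{λ-1} G(γ) dγ. -/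
open MeasureTheory intervalIntegral Real

theorem sarikaya_fractional_hh (m1 m2 : ℝ) (G : ℝ → ℝ) (hm1 : 0 ≤ m1) (hlt : m1 < m2)
    (hnonneg : ∀ x ∈ Set.Icc m1 m2, 0 ≤ G x)
    (hconv : ConvexOn ℝ (Set.Icc m1 m2) G)
    (hint : IntervalIntegrable G volume m1 m2)
    (l : ℝ) (hl : 0 < l) :
    G ((m1 + m2) / 2) ≤ (Real.Gamma (l + 1) / (2 * (m2 - m1) ^ l)) *
        ((1 / Real.Gamma l) * (∫ γ in m1..m2, (m2 - γ) ^ (l - 1) * G γ) +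
         (1 / Real.Gamma l) * (∫ γ in m1..m2, (γ - m1) ^ (l - 1) * G γ)) ∧
      (Real.Gamma (l + 1) / (2 * (m2 - m1) ^ l)) *
        ((1 / Real.Gamma l) * (∫ γ in m1..m2, (m2 - γ) ^ (l - 1) * G γ) +
         (1 / Real.Gamma l) * (∫ γ in m1..m2, (γ - m1) ^ (l - 1) * G γ)) ≤
      (G m1 + G m2) / 2 := by
  have hle := hlt.le
  set d : ℝ := m2 - m1 with hd
  have hdpos : 0 < d := by simp [hd]; linarith
  -- membership helpers
  have hm1mem : m1 ∈ Set.Icc m1 m2 := ⟨le_refl _, hle⟩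
  have hm2mem : m2 ∈ Set.Icc m1 m2 := ⟨hle, le_refl _⟩
  have hrefl : ∀ x ∈ Set.Icc m1 m2, m1 + m2 - x ∈ Set.Icc m1 m2 := by
    intro x hx
    exact ⟨by linarith [hx.2], by linarith [hx.1]⟩
  -- convexity: chord bound
  have key : ∀ x ∈ Set.Icc m1 m2,
      G x ≤ ((m2 - x) / d) * G m1 + ((x - m1) / d) * G m2 := by
    intro x hx
    have ht : 0 ≤ (m2 - x) / d := div_nonneg (by linarith [hx.2]) hdpos.le
    have hs : 0 ≤ (x - m1) / d := div_nonneg (by linarith [hx.1]) hdpos.le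
    have hts : (m2 - x) / d + (x - m1) / d = 1 := by
      field_simp
      rw [hd]; ring
    have h := hconv.2 hm1mem hm2mem ht hs hts
    have hx' : ((m2 - x) / d) • m1 + ((x - m1) / d) • m2 = x := by
      simp only [smul_eq_mul]
      field_simp
      ring
    rwa [hx'] at h
  -- sum bound
  have aux1 : ∀ x ∈ Set.Icc m1 m2, G x + G (m1 + m2 - x) ≤ G m1 + G m2 := by
    intro x hx
    have h1 := key x hx
    have h2 := key (m1 + m2 - x) (hrefl x hx)
    have e1 : (m2 - (m1 + m2 - x)) / d = (x - m1) / d := by ring_nf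
    have e2 : ((m1 + m2 - x) - m1) / d = (m2 - x) / d := by ring_nf
    rw [e1, e2] at h2
    have hts : (m2 - x) / d + (x - m1) / d = 1 := by field_simp; rw [hd]; ring
    calc G x + G (m1 + m2 - x)
        ≤ ((m2 - x) / d * G m1 + (x - m1) / d * G m2)
          + ((x - m1) / d * G m1 + (m2 - x) / d * G m2) := add_le_add h1 h2
      _ = ((m2 - x) / d + (x - m1) / d) * (G m1 + G m2) := by ring
      _ = 1 * (G m1 + G m2) := by rw [hts]
      _ = G m1 + G m2 := one_mul _
  -- midpoint bound
  have aux2 : ∀ x ∈ Set.Icc m1 m2, 2 * G ((m1 + m2) / 2) ≤ G x + G (m1 + m2 - x) := by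
    intro x hx
    have h := hconv.2 hx (hrefl x hx) (by norm_num : (0:ℝ) ≤ 1/2)
      (by norm_num : (0:ℝ) ≤ 1/2) (by norm_num)
    have e : (1/2 : ℝ) • x + (1/2 : ℝ) • (m1 + m2 - x) = (m1 + m2) / 2 := by
      simp only [smul_eq_mul]; ring
    rw [e] at h
    simp only [smul_eq_mul] at h
    linarith
  -- bound on G
  set C : ℝ := max (G m1) (G m2) with hC
  have hGbd : ∀ x ∈ Set.Icc m1 m2, ‖G x‖ ≤ C := by
    intro x hx
    rw [Real.norm_eq_abs, abs_of_nonneg (hnonneg x hx)]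
    calc G x ≤ ((m2 - x) / d) * G m1 + ((x - m1) / d) * G m2 := key x hx
      _ ≤ ((m2 - x) / d) * C + ((x - m1) / d) * C := by
          gcongr
          · exact div_nonneg (by linarith [hx.2]) hdpos.le
          · exact le_max_left _ _
          · exact div_nonneg (by linarith [hx.1]) hdpos.le
          · exact le_max_right _ _
      _ = C := by field_simp; ring
  -- integrability of weights
  have hw1 : IntervalIntegrable (fun x => (m2 - x) ^ (l - 1)) volume m1 m2 := by
    have := (intervalIntegrable_rpow' (a := m2 - m1) (b := m2 - m2)
      (r := l - 1) (by linarith)).comp_sub_left m2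
    simpa using this
  have hw2 : IntervalIntegrable (fun x => (x - m1) ^ (l - 1)) volume m1 m2 := by
    have := (intervalIntegrable_rpow' (a := m1 - m1) (b := m2 - m1)
      (r := l - 1) (by linarith)).comp_sub_right m1
    simpa using this
  -- integrability of weight * G
  have hGae : ∀ᵐ x ∂(volume.restrict (Set.Ioc m1 m2)), ‖G x‖ ≤ C := by
    refine (ae_restrict_iff' measurableSet_Ioc).2 ?_
    exact Filter.Eventually.of_forall fun x hx => hGbd x (Set.Ioc_subset_Icc_self hx)
  have hGm : AEStronglyMeasurable G (volume.restrict (Set.Ioc m1 m2)) :=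
    hint.1.aestronglyMeasurable
  have prodInt : ∀ (w : ℝ → ℝ), IntervalIntegrable w volume m1 m2 →
      IntervalIntegrable (fun x => w x * G x) volume m1 m2 := by
    intro w hw
    rw [intervalIntegrable_iff_integrableOn_Ioc_of_le hle] at hw ⊢
    have := Integrable.bdd_mul (f := G) hw hGm hGae
    exact this.congr (Filter.Eventually.of_forall fun x => mul_comm _ _)
  have hA : IntervalIntegrable (fun x => (m2 - x) ^ (l - 1) * G x) volume m1 m2 :=
    prodInt _ hw1
  have hC2 : IntervalIntegrable (fun x => (x - m1) ^ (l - 1) * G x) volume m1 m2 :=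
    prodInt _ hw2
  have hB : IntervalIntegrable (fun x => (m2 - x) ^ (l - 1) * G (m1 + m2 - x)) volume m1 m2 := by
    have := hC2.comp_sub_left (m1 + m2)
    have h2 : IntervalIntegrable (fun x => ((m1 + m2 - x) - m1) ^ (l - 1) * G (m1 + m2 - x))
        volume m1 m2 := by simpa using this.symm
    refine h2.congr (fun x _ => congrFun (?_ : (fun x => ((m1 + m2 - x) - m1) ^ (l - 1) * G (m1 + m2 - x)) = fun x => (m2 - x) ^ (l - 1) * G (m1 + m2 - x)) x)
    funext x
    have e : m1 + m2 - x - m1 = m2 - x := by ring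
    rw [e]
  -- weight integral value
  have hIw : (∫ x in m1..m2, (m2 - x) ^ (l - 1)) = d ^ l / l := by
    have := intervalIntegral.integral_comp_sub_left (fun x => x ^ (l - 1)) m2
      (a := m1) (b := m2)
    rw [this]
    simp only [sub_self]
    rw [integral_rpow (Or.inl (by linarith))]
    rw [Real.zero_rpow (by linarith : l - 1 + 1 ≠ 0)]
    norm_num
    rw [hd]
  -- reflection identity for I2
  have hI2 : (∫ x in m1..m2, (x - m1) ^ (l - 1) * G x)
      = ∫ x in m1..m2, (m2 - x) ^ (l - 1) * G (m1 + m2 - x) := by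
    have := intervalIntegral.integral_comp_sub_left
      (fun y => (y - m1) ^ (l - 1) * G y) (m1 + m2) (a := m1) (b := m2)
    simp only [add_sub_cancel_left, add_sub_cancel_right] at this
    rw [← this]
    congr 1
    funext x
    have e : m1 + m2 - x - m1 = m2 - x := by ring
    rw [e]
  set I1 : ℝ := ∫ x in m1..m2, (m2 - x) ^ (l - 1) * G x with hI1def
  set I2 : ℝ := ∫ x in m1..m2, (x - m1) ^ (l - 1) * G x with hI2def
  have hS : I1 + I2 = ∫ x in m1..m2, (m2 - x) ^ (l - 1) * (G x + G (m1 + m2 - x)) := by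
    rw [hI1def, hI2, ← intervalIntegral.integral_add hA hB]
    congr 1
    funext x
    ring
  have hwnn : ∀ x ∈ Set.Icc m1 m2, (0:ℝ) ≤ (m2 - x) ^ (l - 1) := fun x hx =>
    Real.rpow_nonneg (by linarith [hx.2]) _
  -- lower bound on S
  have hlow : 2 * G ((m1 + m2) / 2) * (d ^ l / l) ≤ I1 + I2 := by
    rw [hS]
    have : (∫ x in m1..m2, (m2 - x) ^ (l - 1) * (2 * G ((m1 + m2) / 2)))
        ≤ ∫ x in m1..m2, (m2 - x) ^ (l - 1) * (G x + G (m1 + m2 - x)) := by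
      apply intervalIntegral.integral_mono_on hle
        (hw1.mul_const _) ((hA.add hB).congr
          (fun x _ => by ring) : IntervalIntegrable (fun x => (m2 - x) ^ (l - 1) * (G x + G (m1 + m2 - x))) volume m1 m2)
      intro x hx
      exact mul_le_mul_of_nonneg_left (aux2 x hx) (hwnn x hx)
    calc 2 * G ((m1 + m2) / 2) * (d ^ l / l)
        = ∫ x in m1..m2, (m2 - x) ^ (l - 1) * (2 * G ((m1 + m2) / 2)) := by
          rw [intervalIntegral.integral_mul_const, hIw]; ring
      _ ≤ _ := this
  -- upper bound on S
  have hup : I1 + I2 ≤ (G m1 + G m2) * (d ^ l / l) := by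
    rw [hS]
    have : (∫ x in m1..m2, (m2 - x) ^ (l - 1) * (G x + G (m1 + m2 - x)))
        ≤ ∫ x in m1..m2, (m2 - x) ^ (l - 1) * (G m1 + G m2) := by
      apply intervalIntegral.integral_mono_on hle
        ((hA.add hB).congr (fun x _ => by ring) : IntervalIntegrable (fun x => (m2 - x) ^ (l - 1) * (G x + G (m1 + m2 - x))) volume m1 m2)
        (hw1.mul_const _)
      intro x hx
      exact mul_le_mul_of_nonneg_left (aux1 x hx) (hwnn x hx)
    calc _ ≤ ∫ x in m1..m2, (m2 - x) ^ (l - 1) * (G m1 + G m2) := this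
      _ = (G m1 + G m2) * (d ^ l / l) := by
          rw [intervalIntegral.integral_mul_const, hIw]; ring
  -- final arithmetic
  have hGl : Real.Gamma l > 0 := Real.Gamma_pos_of_pos hl
  have hGl1 : Real.Gamma (l + 1) = l * Real.Gamma l := Real.Gamma_add_one hl.ne'
  have hdl : (0:ℝ) < d ^ l := Real.rpow_pos_of_pos hdpos _
  have hK : (Real.Gamma (l + 1) / (2 * d ^ l)) *
      ((1 / Real.Gamma l) * I1 + (1 / Real.Gamma l) * I2)
      = (l / (2 * d ^ l)) * (I1 + I2) := by
    rw [hGl1]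
    field_simp
  rw [hK]
  constructor
  · rw [div_mul_eq_mul_div, le_div_iff₀ (by positivity)]
    calc G ((m1 + m2) / 2) * (2 * d ^ l)
        = (2 * G ((m1 + m2) / 2) * (d ^ l / l)) * l := by field_simp
      _ ≤ (I1 + I2) * l := by
          exact mul_le_mul_of_nonneg_right hlow hl.le
      _ = l * (I1 + I2) := by ring
  · rw [div_mul_eq_mul_div, div_le_iff₀ (by positivity)]
    calc l * (I1 + I2) ≤ l * ((G m1 + G m2) * (d ^ l / l)) :=
          mul_le_mul_of_nonneg_left hup hl.le
      _ = (G m1 + G m2) / 2 * (2 * d ^ l) := by field_simp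
end

section
/- Let G : [m1, m2] → ℝ be nonnegative, nondecreasing, convex, and integrable with 0 < m1 < m2, and λ > 0. Then G(√(m1·m2)) ≤ (Γ(λ+1)/(2(ln m2 - ln m1)^λ))·[H_{m1+}^λ G(m2) + H_{m2-}^λ G(m1)] ≤ G(m2), where H_{m1+}^λ G(x) = (1/Γ(λ)) ∫_{m1}^x (ln(x/γ))^{λ-1} G(γ)/γ dγ and H_{m2-}^λ G(x) = (1/Γ(λ)) ∫_x^{m2} (ln(γ/x))^{λ-1} G(γ)/γ dγ. -/
open MeasureTheory intervalIntegral Real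

theorem hadamard_fractional_hh (m1 m2 : ℝ) (G : ℝ → ℝ) (hm1 : 0 < m1) (hlt : m1 < m2)
    (hnonneg : ∀ x ∈ Set.Icc m1 m2, 0 ≤ G x)
    (hmono : MonotoneOn G (Set.Icc m1 m2))
    (hconv : ConvexOn ℝ (Set.Icc m1 m2) G)
    (hint : IntervalIntegrable G volume m1 m2)
    (l : ℝ) (hl : 0 < l) :
    G (Real.sqrt (m1 * m2)) ≤
        (Real.Gamma (l + 1) / (2 * (Real.log m2 - Real.log m1) ^ l)) *
        ((1 / Real.Gamma l) * (∫ γ in m1..m2, (Real.log (m2 / γ)) ^ (l - 1) * (G γ / γ)) +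
         (1 / Real.Gamma l) * (∫ γ in m1..m2, (Real.log (γ / m1)) ^ (l - 1) * (G γ / γ))) ∧
      (Real.Gamma (l + 1) / (2 * (Real.log m2 - Real.log m1) ^ l)) *
        ((1 / Real.Gamma l) * (∫ γ in m1..m2, (Real.log (m2 / γ)) ^ (l - 1) * (G γ / γ)) +
         (1 / Real.Gamma l) * (∫ γ in m1..m2, (Real.log (γ / m1)) ^ (l - 1) * (G γ / γ))) ≤
      G m2 := by
  have hm2 : 0 < m2 := hm1.trans hlt
  have hm12 : m1 ≤ m2 := hlt.le
  set a := Real.log m1 with ha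
  set b := Real.log m2 with hb
  have hab : a < b := Real.log_lt_log hm1 hlt
  have hea : Real.exp a = m1 := Real.exp_log hm1
  have heb : Real.exp b = m2 := Real.exp_log hm2
  set F : ℝ → ℝ := fun t => G (max m1 (min m2 (Real.exp t))) with hFdef
  have hclampmem : ∀ t : ℝ, max m1 (min m2 (Real.exp t)) ∈ Set.Icc m1 m2 := by
    intro t
    exact ⟨le_max_left _ _, max_le hm12 (min_le_left _ _)⟩
  have hFeq : ∀ t ∈ Set.Icc a b, F t = G (Real.exp t) := by
    intro t ht
    have h1 : m1 ≤ Real.exp t := by rw [← hea]; exact Real.exp_le_exp.2 ht.1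
    have h2 : Real.exp t ≤ m2 := by rw [← heb]; exact Real.exp_le_exp.2 ht.2
    simp only [hFdef, min_eq_right h2, max_eq_right h1]
  have hFmono : Monotone F := by
    intro s t hst
    exact hmono (hclampmem s) (hclampmem t)
      (max_le_max le_rfl (min_le_min le_rfl (Real.exp_le_exp.2 hst)))
  have hFmeas : Measurable F := hFmono.measurable
  have hF0 : ∀ t, 0 ≤ F t := fun t => hnonneg _ (hclampmem t)
  have hFb : ∀ t, F t ≤ G m2 := fun t =>
    hmono (hclampmem t) (Set.right_mem_Icc.2 hm12) (hclampmem t).2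
  -- image of exp
  have himg : Real.exp '' Set.Ioc a b = Set.Ioc m1 m2 := by
    ext x
    simp only [Set.mem_image, Set.mem_Ioc]
    constructor
    · rintro ⟨t, ⟨h1, h2⟩, rfl⟩
      exact ⟨by rw [← hea]; exact Real.exp_lt_exp.2 h1,
             by rw [← heb]; exact Real.exp_le_exp.2 h2⟩
    · rintro ⟨h1, h2⟩
      have hx : 0 < x := hm1.trans h1
      exact ⟨Real.log x, ⟨Real.log_lt_log hm1 h1, Real.log_le_log hx h2⟩, Real.exp_log hx⟩
  have hcov : ∀ g : ℝ → ℝ, ∫ γ in Set.Ioc m1 m2, g γ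
      = ∫ t in Set.Ioc a b, |Real.exp t| • g (Real.exp t) := by
    intro g
    rw [← himg]
    exact MeasureTheory.integral_image_eq_integral_abs_deriv_smul measurableSet_Ioc
      (fun x _ => (Real.hasDerivAt_exp x).hasDerivWithinAt) Real.exp_injective.injOn g
  -- change of variables in the two integrals
  have hI1 : (∫ γ in m1..m2, (Real.log (m2 / γ)) ^ (l - 1) * (G γ / γ))
      = ∫ t in a..b, (b - t) ^ (l - 1) * F t := by
    rw [intervalIntegral.integral_of_le hm12, intervalIntegral.integral_of_le hab.le,
      hcov (fun γ => (Real.log (m2 / γ)) ^ (l - 1) * (G γ / γ))]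
    apply MeasureTheory.setIntegral_congr_fun measurableSet_Ioc
    intro t ht
    have hts : t ∈ Set.Icc a b := Set.Ioc_subset_Icc_self ht
    have hexp : Real.exp t ≠ 0 := (Real.exp_pos t).ne'
    have hld : Real.log (m2 / Real.exp t) = b - t := by
      rw [Real.log_div hm2.ne' hexp, Real.log_exp]
    simp only [smul_eq_mul]
    rw [hld, abs_of_pos (Real.exp_pos t), hFeq t hts]
    field_simp
  have hI2 : (∫ γ in m1..m2, (Real.log (γ / m1)) ^ (l - 1) * (G γ / γ))
      = ∫ t in a..b, (t - a) ^ (l - 1) * F t := by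
    rw [intervalIntegral.integral_of_le hm12, intervalIntegral.integral_of_le hab.le,
      hcov (fun γ => (Real.log (γ / m1)) ^ (l - 1) * (G γ / γ))]
    apply MeasureTheory.setIntegral_congr_fun measurableSet_Ioc
    intro t ht
    have hts : t ∈ Set.Icc a b := Set.Ioc_subset_Icc_self ht
    have hexp : Real.exp t ≠ 0 := (Real.exp_pos t).ne'
    have hld : Real.log (Real.exp t / m1) = t - a := by
      rw [Real.log_div hexp hm1.ne', Real.log_exp]
    simp only [smul_eq_mul]
    rw [hld, abs_of_pos (Real.exp_pos t), hFeq t hts]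
    field_simp
  -- kernel integrability
  have hrm1 : (-1 : ℝ) < l - 1 := by linarith
  have hk1 : IntervalIntegrable (fun t => (b - t) ^ (l - 1)) volume a b := by
    have h0 := (intervalIntegral.intervalIntegrable_rpow' (a := b - a) (b := (0:ℝ)) hrm1).comp_sub_left b
    simpa [sub_sub_cancel] using h0
  have hk2 : IntervalIntegrable (fun t => (t - a) ^ (l - 1)) volume a b := by
    have h0 := (intervalIntegral.intervalIntegrable_rpow' (a := (0:ℝ)) (b := b - a) hrm1).comp_sub_right a
    simpa using h0
  -- kernel nonnegativity on [a,b]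
  have hk1nn : ∀ t ∈ Set.Icc a b, 0 ≤ (b - t) ^ (l - 1) := fun t ht =>
    Real.rpow_nonneg (by linarith [ht.2]) _
  have hk2nn : ∀ t ∈ Set.Icc a b, 0 ≤ (t - a) ^ (l - 1) := fun t ht =>
    Real.rpow_nonneg (by linarith [ht.1]) _
  -- integrability of kernel * F
  have hKF1 : IntervalIntegrable (fun t => (b - t) ^ (l - 1) * F t) volume a b := by
    apply (hk1.mul_const (G m2)).mono_fun
    · rw [Set.uIoc_of_le hab.le]
      exact hk1.aestronglyMeasurable.mul (hFmeas.aestronglyMeasurable.restrict)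
    · rw [Set.uIoc_of_le hab.le]
      refine (ae_restrict_iff' measurableSet_Ioc).2 (Filter.Eventually.of_forall fun t ht => ?_)
      have hknn := hk1nn t (Set.Ioc_subset_Icc_self ht)
      simp only [Real.norm_eq_abs]
      rw [abs_of_nonneg (mul_nonneg hknn (hF0 t)),
        abs_of_nonneg (mul_nonneg hknn ((hF0 t).trans (hFb t)))]
      exact mul_le_mul_of_nonneg_left (hFb t) hknn
  have hKF2 : IntervalIntegrable (fun t => (t - a) ^ (l - 1) * F t) volume a b := by
    apply (hk2.mul_const (G m2)).mono_fun
    · rw [Set.uIoc_of_le hab.le]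
      exact hk2.aestronglyMeasurable.mul (hFmeas.aestronglyMeasurable.restrict)
    · rw [Set.uIoc_of_le hab.le]
      refine (ae_restrict_iff' measurableSet_Ioc).2 (Filter.Eventually.of_forall fun t ht => ?_)
      have hknn := hk2nn t (Set.Ioc_subset_Icc_self ht)
      simp only [Real.norm_eq_abs]
      rw [abs_of_nonneg (mul_nonneg hknn (hF0 t)),
        abs_of_nonneg (mul_nonneg hknn ((hF0 t).trans (hFb t)))]
      exact mul_le_mul_of_nonneg_left (hFb t) hknn
  have hKF : IntervalIntegrable
      (fun t => ((b - t) ^ (l - 1) + (t - a) ^ (l - 1)) * F t) volume a b := by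
    have heqf : (fun t => ((b - t) ^ (l - 1) + (t - a) ^ (l - 1)) * F t)
        = fun t => (b - t) ^ (l - 1) * F t + (t - a) ^ (l - 1) * F t := by
      funext t; ring
    rw [heqf]; exact hKF1.add hKF2
  have hKFr : IntervalIntegrable
      (fun t => ((b - t) ^ (l - 1) + (t - a) ^ (l - 1)) * F (a + b - t)) volume a b := by
    have h0 := (hKF.comp_sub_left (a + b)).symm
    have heqf : (fun x => ((b - (a + b - x)) ^ (l - 1) + ((a + b - x) - a) ^ (l - 1)) * F (a + b - x))
        = fun t => ((b - t) ^ (l - 1) + (t - a) ^ (l - 1)) * F (a + b - t) := by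
      funext x
      rw [show b - (a + b - x) = x - a by ring, show (a + b - x) - a = b - x by ring]
      ring
    rw [show (a + b) - b = a by ring, show (a + b) - a = b by ring] at h0
    rwa [heqf] at h0
  -- kernel integral values
  have hne : l - 1 + 1 ≠ 0 := by rw [show l - 1 + 1 = l by ring]; exact hl.ne'
  have hk1int : (∫ t in a..b, (b - t) ^ (l - 1)) = (b - a) ^ l / l := by
    rw [intervalIntegral.integral_comp_sub_left (fun x => x ^ (l - 1)) b, sub_self,
      integral_rpow (Or.inl hrm1), Real.zero_rpow hne, show l - 1 + 1 = l by ring]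
    ring
  have hk2int : (∫ t in a..b, (t - a) ^ (l - 1)) = (b - a) ^ l / l := by
    rw [intervalIntegral.integral_comp_sub_right (fun x => x ^ (l - 1)) a, sub_self,
      integral_rpow (Or.inl hrm1), Real.zero_rpow hne, show l - 1 + 1 = l by ring]
    ring
  set S : ℝ := (b - a) ^ l / l with hS
  have hKint : (∫ t in a..b, ((b - t) ^ (l - 1) + (t - a) ^ (l - 1))) = S + S := by
    rw [intervalIntegral.integral_add hk1 hk2, hk1int, hk2int]
  -- the midpoint bound
  set Fc : ℝ := G (Real.sqrt (m1 * m2)) with hFc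
  have hmid : ∀ t ∈ Set.Icc a b, 2 * Fc ≤ F t + F (a + b - t) := by
    intro t ht
    have hts : a + b - t ∈ Set.Icc a b := ⟨by linarith [ht.2], by linarith [ht.1]⟩
    set x := Real.exp t with hx'
    set y := Real.exp (a + b - t) with hy'
    have hx : x ∈ Set.Icc m1 m2 :=
      ⟨by rw [← hea]; exact Real.exp_le_exp.2 ht.1, by rw [← heb]; exact Real.exp_le_exp.2 ht.2⟩
    have hy : y ∈ Set.Icc m1 m2 :=
      ⟨by rw [← hea]; exact Real.exp_le_exp.2 hts.1, by rw [← heb]; exact Real.exp_le_exp.2 hts.2⟩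
    have hxy : x * y = m1 * m2 := by
      rw [hx', hy', ← Real.exp_add, show t + (a + b - t) = a + b by ring, Real.exp_add, hea, heb]
    have hmean : Real.sqrt (m1 * m2) ≤ (x + y) / 2 := by
      rw [← hxy]
      have h4 : x * y ≤ ((x + y) / 2) ^ 2 := by nlinarith [sq_nonneg (x - y)]
      calc Real.sqrt (x * y) ≤ Real.sqrt (((x + y) / 2) ^ 2) := Real.sqrt_le_sqrt h4
        _ = (x + y) / 2 := Real.sqrt_sq (by linarith [hx.1, hy.1, hm1])
    have hsmem : Real.sqrt (m1 * m2) ∈ Set.Icc m1 m2 := by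
      constructor
      · have h := Real.sqrt_le_sqrt (show m1 * m1 ≤ m1 * m2 by nlinarith)
        rwa [Real.sqrt_mul_self hm1.le] at h
      · have h := Real.sqrt_le_sqrt (show m1 * m2 ≤ m2 * m2 by nlinarith)
        rwa [Real.sqrt_mul_self hm2.le] at h
    have hmmem : (x + y) / 2 ∈ Set.Icc m1 m2 :=
      ⟨by linarith [hx.1, hy.1], by linarith [hx.2, hy.2]⟩
    have h1 : Fc ≤ G ((x + y) / 2) := hmono hsmem hmmem hmean
    have h2 : G ((x + y) / 2) ≤ (1 / 2) * G x + (1 / 2) * G y := by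
      have h := hconv.2 hx hy (by norm_num : (0:ℝ) ≤ 1/2) (by norm_num : (0:ℝ) ≤ 1/2)
        (by norm_num : (1:ℝ)/2 + 1/2 = 1)
      have e : (1/2 : ℝ) • x + (1/2 : ℝ) • y = (x + y) / 2 := by
        rw [smul_eq_mul, smul_eq_mul]; ring
      rw [e] at h
      simpa [smul_eq_mul] using h
    have h3 : F t = G x := hFeq t ht
    have h4 : F (a + b - t) = G y := hFeq _ hts
    rw [h3, h4]
    linarith
  -- reflection identity
  have hrefl : (∫ t in a..b, ((b - t) ^ (l - 1) + (t - a) ^ (l - 1)) * F (a + b - t))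
      = ∫ t in a..b, ((b - t) ^ (l - 1) + (t - a) ^ (l - 1)) * F t := by
    have h0 := intervalIntegral.integral_comp_sub_left (a := a) (b := b)
      (fun x => ((b - x) ^ (l - 1) + (x - a) ^ (l - 1)) * F x) (a + b)
    rw [show (a + b) - b = a by ring, show (a + b) - a = b by ring] at h0
    rw [← h0]
    apply intervalIntegral.integral_congr
    intro x _
    simp only
    rw [show b - (a + b - x) = x - a by ring, show (a + b - x) - a = b - x by ring]
    ring
  -- left bound on the t-integral
  set J : ℝ := ∫ t in a..b, ((b - t) ^ (l - 1) + (t - a) ^ (l - 1)) * F t with hJ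
  have hsum_eq : (∫ t in a..b, ((b - t) ^ (l - 1) + (t - a) ^ (l - 1)) * (F t + F (a + b - t)))
      = 2 * J := by
    have heqf : (fun t => ((b - t) ^ (l - 1) + (t - a) ^ (l - 1)) * (F t + F (a + b - t)))
        = fun t => ((b - t) ^ (l - 1) + (t - a) ^ (l - 1)) * F t
          + ((b - t) ^ (l - 1) + (t - a) ^ (l - 1)) * F (a + b - t) := by
      funext t; ring
    rw [heqf, intervalIntegral.integral_add hKF hKFr, hrefl, hJ]; ring
  have hlow : 2 * Fc * (S + S) ≤ 2 * J := by
    have hmono' : (∫ t in a..b, ((b - t) ^ (l - 1) + (t - a) ^ (l - 1)) * (2 * Fc))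
        ≤ ∫ t in a..b, ((b - t) ^ (l - 1) + (t - a) ^ (l - 1)) * (F t + F (a + b - t)) := by
      apply intervalIntegral.integral_mono_on hab.le ((hk1.add hk2).mul_const (2 * Fc))
        (by
          have heqf : (fun t => ((b - t) ^ (l - 1) + (t - a) ^ (l - 1)) * (F t + F (a + b - t)))
              = fun t => ((b - t) ^ (l - 1) + (t - a) ^ (l - 1)) * F t
                + ((b - t) ^ (l - 1) + (t - a) ^ (l - 1)) * F (a + b - t) := by
            funext t; ring
          rw [heqf]; exact hKF.add hKFr)
      intro t ht
      exact mul_le_mul_of_nonneg_left (hmid t ht) (add_nonneg (hk1nn t ht) (hk2nn t ht))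
    rw [hsum_eq] at hmono'
    rw [intervalIntegral.integral_mul_const, hKint] at hmono'
    linarith
  have hleft : Fc * (S + S) ≤ J := by linarith
  -- right bound on the t-integral
  have hright : J ≤ G m2 * (S + S) := by
    have hmono' : J ≤ ∫ t in a..b, ((b - t) ^ (l - 1) + (t - a) ^ (l - 1)) * G m2 := by
      apply intervalIntegral.integral_mono_on hab.le hKF ((hk1.add hk2).mul_const (G m2))
      intro t ht
      exact mul_le_mul_of_nonneg_left (hFb t) (add_nonneg (hk1nn t ht) (hk2nn t ht))
    rw [intervalIntegral.integral_mul_const, hKint] at hmono'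
    linarith
  -- J = J1 + J2
  have hJsplit : J = (∫ t in a..b, (b - t) ^ (l - 1) * F t)
      + ∫ t in a..b, (t - a) ^ (l - 1) * F t := by
    rw [hJ]
    have heqf : (fun t => ((b - t) ^ (l - 1) + (t - a) ^ (l - 1)) * F t)
        = fun t => (b - t) ^ (l - 1) * F t + (t - a) ^ (l - 1) * F t := by
      funext t; ring
    rw [heqf, intervalIntegral.integral_add hKF1 hKF2]
  -- final arithmetic
  have hΓ : 0 < Real.Gamma l := Real.Gamma_pos_of_pos hl
  have hΓ1 : Real.Gamma (l + 1) = l * Real.Gamma l := Real.Gamma_add_one hl.ne'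
  have hLl : 0 < (b - a) ^ l := Real.rpow_pos_of_pos (by linarith) l
  have hSl : S * l = (b - a) ^ l := div_mul_cancel₀ _ hl.ne'
  rw [hI1, hI2, hΓ1]
  set J1 : ℝ := ∫ t in a..b, (b - t) ^ (l - 1) * F t
  set J2 : ℝ := ∫ t in a..b, (t - a) ^ (l - 1) * F t
  have hM : (l * Real.Gamma l / (2 * (b - a) ^ l)) * ((1 / Real.Gamma l) * J1 + (1 / Real.Gamma l) * J2)
      = l * (J1 + J2) / (2 * (b - a) ^ l) := by
    field_simp
  rw [hM, ← hJsplit]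
  have hJle : l * J ≤ G m2 * ((b - a) ^ l + (b - a) ^ l) := by
    have h := mul_le_mul_of_nonneg_left hright hl.le
    calc l * J ≤ l * (G m2 * (S + S)) := h
      _ = G m2 * ((b - a) ^ l + (b - a) ^ l) := by rw [hS]; field_simp
  have hJge : Fc * ((b - a) ^ l + (b - a) ^ l) ≤ l * J := by
    have h := mul_le_mul_of_nonneg_left hleft hl.le
    calc Fc * ((b - a) ^ l + (b - a) ^ l) = l * (Fc * (S + S)) := by rw [hS]; field_simp
      _ ≤ l * J := h
  constructor
  · rw [le_div_iff₀ (by positivity)]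
    linarith
  · rw [div_le_iff₀ (by positivity)]
    linarith
end

section
/- Let m1, m2 ∈ ℝ with m1 < m2 and θ ∈ ℕ with θ ≥ 2. Then |A(m1^θ, m2^θ) - L_θ(m1, m2)^θ| ≤ (θ(m2-m1)/4)·A(|m1|^{θ-1}, |m2|^{θ-1}), i.e., |(m1^θ + m2^θ)/2 - (m2^{θ+1} - m1^{θ+1})/((θ+1)(m2-m1))| ≤ (θ(m2-m1)/4)·(|m1|^{θ-1} + |m2|^{θ-1})/2. -/
open intervalIntegral MeasureTheory Set

private lemma poly_int (a b p q r : ℝ) :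
    ∫ x in a..b, (p + q * x + r * x ^ 2) =
      p * (b - a) + q * (b ^ 2 - a ^ 2) / 2 + r * (b ^ 3 - a ^ 3) / 3 := by
  have h1 : IntervalIntegrable (fun x : ℝ => p + q * x) volume a b :=
    (continuous_const.add (continuous_const.mul continuous_id)).intervalIntegrable a b
  have h2 : IntervalIntegrable (fun x : ℝ => r * x ^ 2) volume a b :=
    (continuous_const.mul (continuous_pow 2)).intervalIntegrable a b
  have h3 : IntervalIntegrable (fun x : ℝ => q * x) volume a b :=
    (continuous_const.mul continuous_id).intervalIntegrable a b
  rw [integral_add h1 h2, integral_add intervalIntegrable_const h3,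
    intervalIntegral.integral_const, intervalIntegral.integral_const_mul, intervalIntegral.integral_const_mul, integral_id,
    integral_pow]
  simp only [smul_eq_mul]; ring

private lemma abs_lin_int (a b c d m : ℝ) (hab : a ≤ b) (hm : m = (a + b) / 2) :
    ∫ x in a..b, |x - m| * (c + d * x) = (c + d * m) * (b - a) ^ 2 / 4 := by
  have ham : a ≤ m := by rw [hm]; linarith
  have hmb : m ≤ b := by rw [hm]; linarith
  have hint : ∀ u v : ℝ, IntervalIntegrable (fun x : ℝ => |x - m| * (c + d * x)) volume u v :=
    fun u v => (((continuous_id.sub continuous_const).abs).mul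
      (continuous_const.add (continuous_const.mul continuous_id))).intervalIntegrable u v
  rw [← integral_add_adjacent_intervals (hint a m) (hint m b)]
  have e1 : ∫ x in a..m, |x - m| * (c + d * x) =
      ∫ x in a..m, (m * c + (d * m - c) * x + (-d) * x ^ 2) := by
    apply integral_congr
    intro x hx
    rw [uIcc_of_le ham] at hx
    dsimp only
    rw [abs_of_nonpos (by linarith [hx.2])]
    ring
  have e2 : ∫ x in m..b, |x - m| * (c + d * x) =
      ∫ x in m..b, ((-m) * c + (c - d * m) * x + d * x ^ 2) := by
    apply integral_congr
    intro x hx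
    rw [uIcc_of_le hmb] at hx
    dsimp only
    rw [abs_of_nonneg (by linarith [hx.1])]
    ring
  rw [e1, e2, poly_int, poly_int, hm]
  ring

theorem special_means_ineq (m1 m2 : ℝ) (hlt : m1 < m2) (θ : ℕ) (hθ : 2 ≤ θ) :
    |(m1 ^ θ + m2 ^ θ) / 2 -
        (m2 ^ (θ + 1) - m1 ^ (θ + 1)) / ((θ + 1 : ℝ) * (m2 - m1))| ≤
      ((θ : ℝ) * (m2 - m1) / 4) * ((|m1| ^ (θ - 1) + |m2| ^ (θ - 1)) / 2) := by
  obtain ⟨n, rfl⟩ : ∃ n, θ = n + 2 := ⟨θ - 2, by omega⟩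
  have hsub : n + 2 - 1 = n + 1 := rfl
  rw [hsub]
  have hba : (0:ℝ) < m2 - m1 := by linarith
  set m : ℝ := (m1 + m2) / 2 with hm
  set A : ℝ := |m1| ^ (n + 1) with hA
  set B : ℝ := |m2| ^ (n + 1) with hB
  have hA0 : 0 ≤ A := pow_nonneg (abs_nonneg _) _
  have hB0 : 0 ≤ B := pow_nonneg (abs_nonneg _) _
  -- Step 1: the integral identity
  have hI : ∫ x in m1..m2, (x - m) * (((n:ℝ) + 2) * x ^ (n + 1)) =
      ((m1 ^ (n + 2) + m2 ^ (n + 2)) / 2 -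
        (m2 ^ (n + 2 + 1) - m1 ^ (n + 2 + 1)) / (((n:ℝ) + 2 + 1) * (m2 - m1))) * (m2 - m1) := by
    have efun : (fun x : ℝ => (x - m) * (((n:ℝ) + 2) * x ^ (n + 1))) =
        fun x : ℝ => ((n:ℝ) + 2) * x ^ (n + 2) - (m * ((n:ℝ) + 2)) * x ^ (n + 1) := by
      funext x; ring
    rw [efun, integral_sub (f := fun x : ℝ => ((n:ℝ) + 2) * x ^ (n + 2))
      (g := fun x : ℝ => (m * ((n:ℝ) + 2)) * x ^ (n + 1))
      ((continuous_const.mul (continuous_pow _)).intervalIntegrable _ _)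
      ((continuous_const.mul (continuous_pow _)).intervalIntegrable _ _),
      intervalIntegral.integral_const_mul, intervalIntegral.integral_const_mul, integral_pow, integral_pow]
    push_cast
    field_simp
    ring
  -- Step 2: pointwise convexity bound
  have hconv : ∀ x ∈ Icc m1 m2,
      |x| ^ (n + 1) ≤ ((m2 - x) * A + (x - m1) * B) / (m2 - m1) := by
    intro x hx
    set t : ℝ := (m2 - x) / (m2 - m1) with ht
    set s : ℝ := (x - m1) / (m2 - m1) with hs
    have ht0 : 0 ≤ t := div_nonneg (by linarith [hx.2]) hba.le
    have hs0 : 0 ≤ s := div_nonneg (by linarith [hx.1]) hba.le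
    have hts : t + s = 1 := by rw [ht, hs]; field_simp; ring
    have hx' : t * m1 + s * m2 = x := by rw [ht, hs]; field_simp; try ring
    have habs : |x| ≤ t * |m1| + s * |m2| := by
      calc |x| = |t * m1 + s * m2| := by rw [hx']
        _ ≤ |t * m1| + |s * m2| := abs_add_le _ _
        _ = t * |m1| + s * |m2| := by
            rw [abs_mul, abs_mul, abs_of_nonneg ht0, abs_of_nonneg hs0]
    have hcv := (convexOn_pow (n + 1)).2 (Set.mem_Ici.mpr (abs_nonneg m1))
      (Set.mem_Ici.mpr (abs_nonneg m2)) ht0 hs0 hts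
    simp only [smul_eq_mul] at hcv
    have h1 : |x| ^ (n + 1) ≤ (t * |m1| + s * |m2|) ^ (n + 1) :=
      pow_le_pow_left₀ (abs_nonneg x) habs _
    have h2 : t * A + s * B = ((m2 - x) * A + (x - m1) * B) / (m2 - m1) := by
      rw [ht, hs]; field_simp; try ring
    calc |x| ^ (n + 1) ≤ (t * |m1| + s * |m2|) ^ (n + 1) := h1
      _ ≤ t * |m1| ^ (n + 1) + s * |m2| ^ (n + 1) := hcv
      _ = ((m2 - x) * A + (x - m1) * B) / (m2 - m1) := h2
  -- Step 3: bound the integral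
  have hbound : |∫ x in m1..m2, (x - m) * (((n:ℝ) + 2) * x ^ (n + 1))| ≤
      ∫ x in m1..m2,
        |x - m| * (((n:ℝ) + 2) * (((m2 - x) * A + (x - m1) * B) / (m2 - m1))) := by
    refine (intervalIntegral.abs_integral_le_integral_abs hlt.le).trans ?_
    apply integral_mono_on hlt.le
    · exact (((continuous_id.sub continuous_const).mul
        (continuous_const.mul (continuous_pow _))).abs).intervalIntegrable _ _
    · apply Continuous.intervalIntegrable
      continuity
    · intro x hx
      rw [abs_mul, abs_mul, abs_pow, abs_of_nonneg (by positivity : (0:ℝ) ≤ (n:ℝ) + 2)]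
      apply mul_le_mul_of_nonneg_left _ (abs_nonneg _)
      exact mul_le_mul_of_nonneg_left (hconv x hx) (by positivity)
  -- Step 4: compute the bounding integral
  have hcompute : ∫ x in m1..m2,
      |x - m| * (((n:ℝ) + 2) * (((m2 - x) * A + (x - m1) * B) / (m2 - m1))) =
      (((n:ℝ) + 2) * (m2 - m1) / 4) * ((A + B) / 2) * (m2 - m1) := by
    set c : ℝ := ((n:ℝ) + 2) * (m2 * A - m1 * B) / (m2 - m1) with hc
    set d : ℝ := ((n:ℝ) + 2) * (B - A) / (m2 - m1) with hd
    have efun : (fun x : ℝ =>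
        |x - m| * (((n:ℝ) + 2) * (((m2 - x) * A + (x - m1) * B) / (m2 - m1)))) =
        fun x : ℝ => |x - m| * (c + d * x) := by
      funext x
      congr 1
      rw [hc, hd]
      field_simp
      ring
    rw [efun, abs_lin_int m1 m2 c d m hlt.le hm, hc, hd, hm]
    field_simp
    ring
  -- Final assembly
  have h6 : |(m1 ^ (n + 2) + m2 ^ (n + 2)) / 2 -
      (m2 ^ (n + 2 + 1) - m1 ^ (n + 2 + 1)) / (((n:ℝ) + 2 + 1) * (m2 - m1))| * (m2 - m1) ≤
      (((n:ℝ) + 2) * (m2 - m1) / 4) * ((A + B) / 2) * (m2 - m1) := by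
    calc |(m1 ^ (n + 2) + m2 ^ (n + 2)) / 2 -
        (m2 ^ (n + 2 + 1) - m1 ^ (n + 2 + 1)) / (((n:ℝ) + 2 + 1) * (m2 - m1))| * (m2 - m1)
        = |((m1 ^ (n + 2) + m2 ^ (n + 2)) / 2 -
            (m2 ^ (n + 2 + 1) - m1 ^ (n + 2 + 1)) / (((n:ℝ) + 2 + 1) * (m2 - m1))) * (m2 - m1)| := by
          rw [abs_mul, abs_of_pos hba]
      _ = |∫ x in m1..m2, (x - m) * (((n:ℝ) + 2) * x ^ (n + 1))| := by rw [hI]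
      _ ≤ ∫ x in m1..m2,
            |x - m| * (((n:ℝ) + 2) * (((m2 - x) * A + (x - m1) * B) / (m2 - m1))) := hbound
      _ = (((n:ℝ) + 2) * (m2 - m1) / 4) * ((A + B) / 2) * (m2 - m1) := hcompute
  have key := le_of_mul_le_mul_right h6 hba
  push_cast
  exact key
end
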